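/- arXiv:1904.13070 — 7 statements merged into one kernel-verified Lean document; each statement's English description precedes it below -/
import Mathlib

section
/- Under the network assumptions, the scalar consensus iteration λ_i(k+1) = Σ_{j=1}^n W(k)_{ij} λ_j(k) converges geometrically to the average of the initial values: setting λ* = (1/n) Σ_{j=1}^n λ_j(0), for every i and every k ≥ 0 one has |λ_i(k+1) − λ*| ≤ n·μ·β^{k} · max_{1≤j≤n} |λ_j(0)|; in particular λ_i(k) → λ* as k → ∞ for every i. -/
open Filter

/-- Product of the weight matrices `W (k+m-1) * ⋯ * W k`. -/
def prodW {n : ℕ} (W : ℕ → Matrix (Fin n) (Fin n) ℝ) (k : ℕ) : ℕ → Matrix (Fin n) (Fin n) ℝ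
  | 0 => 1
  | m + 1 => W (k + m) * prodW W k m

lemma prodW_comp {n : ℕ} (W : ℕ → Matrix (Fin n) (Fin n) ℝ) :
    ∀ (b a k : ℕ), prodW W k (a + b) = prodW W (k + a) b * prodW W k a := by
  intro b
  induction b with
  | zero => intro a k; simp [prodW]
  | succ b ih =>
      intro a k
      have h1 : a + (b + 1) = (a + b) + 1 := by ring
      rw [h1]
      show W (k + (a + b)) * prodW W k (a + b) = prodW W (k + a) (b + 1) * prodW W k a
      rw [ih a k]
      show W (k + (a + b)) * (prodW W (k + a) b * prodW W k a)
        = (W ((k + a) + b) * prodW W (k + a) b) * prodW W k a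
      rw [Matrix.mul_assoc, add_assoc]

lemma prodW_nonneg {n : ℕ} (W : ℕ → Matrix (Fin n) (Fin n) ℝ)
    (hW : ∀ k i j, 0 ≤ W k i j) :
    ∀ (m k : ℕ) (i j : Fin n), 0 ≤ prodW W k m i j := by
  intro m
  induction m with
  | zero =>
      intro k i j
      show (0:ℝ) ≤ (1 : Matrix (Fin n) (Fin n) ℝ) i j
      rw [Matrix.one_apply]
      split <;> norm_num
  | succ m ih =>
      intro k i j
      show (0:ℝ) ≤ (W (k + m) * prodW W k m) i j
      rw [Matrix.mul_apply]
      exact Finset.sum_nonneg fun l _ => mul_nonneg (hW _ _ _) (ih k l j)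

lemma prodW_rowsum {n : ℕ} (W : ℕ → Matrix (Fin n) (Fin n) ℝ)
    (hW : ∀ k i, ∑ j, W k i j = 1) :
    ∀ (m k : ℕ) (i : Fin n), ∑ j, prodW W k m i j = 1 := by
  intro m
  induction m with
  | zero =>
      intro k i
      show ∑ j, (1 : Matrix (Fin n) (Fin n) ℝ) i j = 1
      simp [Matrix.one_apply]
  | succ m ih =>
      intro k i
      show ∑ j, (W (k + m) * prodW W k m) i j = 1
      simp only [Matrix.mul_apply]
      rw [Finset.sum_comm]
      calc ∑ l, ∑ j, W (k + m) i l * prodW W k m l j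
          = ∑ l, W (k + m) i l * ∑ j, prodW W k m l j := by
            simp [Finset.mul_sum]
        _ = ∑ l, W (k + m) i l := by
            refine Finset.sum_congr rfl fun l _ => ?_
            rw [ih k l, mul_one]
        _ = 1 := hW _ _

lemma prodW_diag {n : ℕ} (W : ℕ → Matrix (Fin n) (Fin n) ℝ) (η : ℝ) (hη : 0 ≤ η)
    (hW : ∀ k i j, 0 ≤ W k i j) (hdiag : ∀ k i, η ≤ W k i i) :
    ∀ (m k : ℕ) (i : Fin n), η ^ m ≤ prodW W k m i i := by
  intro m
  induction m with
  | zero =>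
      intro k i
      show η ^ 0 ≤ (1 : Matrix (Fin n) (Fin n) ℝ) i i
      rw [Matrix.one_apply_eq, pow_zero]
  | succ m ih =>
      intro k i
      show η ^ (m + 1) ≤ (W (k + m) * prodW W k m) i i
      rw [Matrix.mul_apply]
      have h1 : η ^ (m + 1) ≤ W (k + m) i i * prodW W k m i i := by
        rw [pow_succ, mul_comm]
        exact mul_le_mul (hdiag _ _) (ih k i) (pow_nonneg hη m)
          (le_trans hη (hdiag _ _))
      refine h1.trans (Finset.single_le_sum (f := fun l => W (k + m) i l * prodW W k m l i)
        (fun l _ => mul_nonneg (hW _ _ _) (prodW_nonneg W hW m k l i)) (Finset.mem_univ i))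

lemma prodW_edge {n : ℕ} (W : ℕ → Matrix (Fin n) (Fin n) ℝ) (η : ℝ) (hη : 0 ≤ η)
    (hW : ∀ k i j, 0 ≤ W k i j) (hdiag : ∀ k i, η ≤ W k i i)
    (m k s : ℕ) (hks : k ≤ s) (hsm : s < k + m) (i j : Fin n) (hedge : η ≤ W s i j) :
    η ^ m ≤ prodW W k m i j := by
  set a := s - k with ha
  set t := k + m - s - 1 with ht
  have hm : m = (a + 1) + t := by omega
  have hs : k + a = s := by omega
  have hs1 : k + (a + 1) = s + 1 := by omega
  rw [hm, prodW_comp W t (a + 1) k, hs1]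
  have hB : η * η ^ a ≤ (prodW W k (a + 1)) i j := by
    show η * η ^ a ≤ (W (k + a) * prodW W k a) i j
    rw [Matrix.mul_apply, hs]
    have h1 : η * η ^ a ≤ W s i j * prodW W k a j j :=
      mul_le_mul hedge (prodW_diag W η hη hW hdiag a k j) (pow_nonneg hη a)
        (le_trans hη hedge)
    exact h1.trans (Finset.single_le_sum (f := fun l => W s i l * prodW W k a l j)
      (fun l _ => mul_nonneg (hW _ _ _) (prodW_nonneg W hW a k l j)) (Finset.mem_univ j))
  rw [Matrix.mul_apply]
  have h2 : η ^ t * (η * η ^ a) ≤ prodW W (s + 1) t i i * prodW W k (a + 1) i j :=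
    mul_le_mul (prodW_diag W η hη hW hdiag t (s + 1) i) hB
      (mul_nonneg hη (pow_nonneg hη a)) (prodW_nonneg W hW t (s + 1) i i)
  have h3 : η ^ ((a + 1) + t) = η ^ t * (η * η ^ a) := by ring
  rw [h3]
  exact h2.trans (Finset.single_le_sum
    (f := fun l => prodW W (s + 1) t i l * prodW W k (a + 1) l j)
    (fun l _ => mul_nonneg (prodW_nonneg W hW t (s + 1) i l)
      (prodW_nonneg W hW (a + 1) k l j)) (Finset.mem_univ i))

lemma lam_prodW {n : ℕ} (W : ℕ → Matrix (Fin n) (Fin n) ℝ) (lam : ℕ → Fin n → ℝ)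
    (hrec : ∀ k, ∀ i, lam (k + 1) i = ∑ j, W k i j * lam k j) :
    ∀ (m k : ℕ) (i : Fin n), lam (k + m) i = ∑ j, prodW W k m i j * lam k j := by
  intro m
  induction m with
  | zero =>
      intro k i
      show lam k i = ∑ j, (1 : Matrix (Fin n) (Fin n) ℝ) i j * lam k j
      simp [Matrix.one_apply]
  | succ m ih =>
      intro k i
      have h1 : k + (m + 1) = (k + m) + 1 := by ring
      rw [h1, hrec (k + m) i]
      calc ∑ l, W (k + m) i l * lam (k + m) l
          = ∑ l, W (k + m) i l * ∑ j, prodW W k m l j * lam k j := by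
            refine Finset.sum_congr rfl fun l _ => ?_; rw [ih k l]
        _ = ∑ l, ∑ j, W (k + m) i l * (prodW W k m l j * lam k j) := by
            simp [Finset.mul_sum]
        _ = ∑ j, ∑ l, W (k + m) i l * (prodW W k m l j * lam k j) := Finset.sum_comm
        _ = ∑ j, (W (k + m) * prodW W k m) i j * lam k j := by
            refine Finset.sum_congr rfl fun j _ => ?_
            rw [Matrix.mul_apply, Finset.sum_mul]
            exact Finset.sum_congr rfl fun l _ => by ring



/-- Theorem 1(a) together with estimate (4-4): under the network assumptions,
the scalar consensus iteration `λᵢ(k+1) = Σⱼ W(k)ᵢⱼ λⱼ(k)` satisfies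
`|λᵢ(k+1) − λ*| ≤ n·μ·βᵏ·maxⱼ |λⱼ(0)|` where `λ* = (1/n) Σⱼ λⱼ(0)`; in particular
`λᵢ(k) → λ*` for every `i`. -/
theorem consensus_geometric_convergence
    {n : ℕ} (hn : 0 < n)
    (η : ℝ) (hη : η ∈ Set.Ioo (0 : ℝ) 1) (κ : ℕ) (hκ : 1 ≤ κ)
    (W : ℕ → Matrix (Fin n) (Fin n) ℝ)
    (hWnonneg : ∀ k i j, 0 ≤ W k i j)
    (hWrow : ∀ k i, ∑ j, W k i j = 1)
    (hWcol : ∀ k j, ∑ i, W k i j = 1)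
    (hWdiag : ∀ k i, η ≤ W k i i)
    (hWpos : ∀ k i j, W k i j ≠ 0 → η ≤ W k i j)
    (hWconn : ∀ k, ∀ i j : Fin n, ∃ s, k ≤ s ∧ s < k + κ ∧ η ≤ W s i j)
    (lam : ℕ → Fin n → ℝ)
    (hrec : ∀ k, ∀ i, lam (k + 1) i = ∑ j, W k i j * lam k j)
    (K₀ : ℕ) (hK₀ : K₀ = (n - 1) * κ)
    (β μ : ℝ)
    (hβ : β = (1 - η ^ K₀) ^ ((K₀ : ℝ)⁻¹))
    (hμ : μ = 2 * (1 + (η ^ K₀)⁻¹) / (1 - η ^ K₀))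
    (lamstar : ℝ) (hlamstar : lamstar = (n : ℝ)⁻¹ * ∑ j, lam 0 j) :
    (∀ i : Fin n, ∀ k : ℕ,
      |lam (k + 1) i - lamstar| ≤
        (n : ℝ) * μ * β ^ k *
          Finset.univ.sup' (Finset.univ_nonempty_iff.mpr ⟨⟨0, hn⟩⟩) (fun j => |lam 0 j|)) ∧
      ∀ i : Fin n, Tendsto (fun k => lam k i) atTop (nhds lamstar) := by
  obtain ⟨hη0, hη1⟩ := hη
  have hne : (Finset.univ : Finset (Fin n)).Nonempty :=
    Finset.univ_nonempty_iff.mpr ⟨⟨0, hn⟩⟩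
  set M := Finset.univ.sup' hne (fun j => |lam 0 j|) with hM
  have hM0 : 0 ≤ M :=
    le_trans (abs_nonneg (lam 0 ⟨0, hn⟩))
      (Finset.le_sup' (fun j => |lam 0 j|) (Finset.mem_univ ⟨0, hn⟩))
  set S : ℕ → ℝ := fun k => Finset.univ.sup' hne (lam k) with hSdef
  set I : ℕ → ℝ := fun k => Finset.univ.inf' hne (lam k) with hIdef
  -- basic inequalities
  have hlamS : ∀ k i, lam k i ≤ S k := fun k i => Finset.le_sup' (lam k) (Finset.mem_univ i)
  have hIlam : ∀ k i, I k ≤ lam k i := fun k i => Finset.inf'_le (lam k) (Finset.mem_univ i)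
  have hIS : ∀ k, I k ≤ S k := fun k => le_trans (hIlam k ⟨0, hn⟩) (hlamS k ⟨0, hn⟩)
  -- one step monotonicity
  have hS1 : ∀ k, S (k + 1) ≤ S k := by
    intro k
    refine Finset.sup'_le hne _ fun i _ => ?_
    rw [hrec k i]
    calc ∑ j, W k i j * lam k j ≤ ∑ j, W k i j * S k :=
          Finset.sum_le_sum fun j _ => mul_le_mul_of_nonneg_left (hlamS k j) (hWnonneg k i j)
      _ = S k := by rw [← Finset.sum_mul, hWrow k i, one_mul]
  have hI1 : ∀ k, I k ≤ I (k + 1) := by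
    intro k
    refine Finset.le_inf' hne _ fun i _ => ?_
    rw [hrec k i]
    calc I k = ∑ j, W k i j * I k := by rw [← Finset.sum_mul, hWrow k i, one_mul]
      _ ≤ ∑ j, W k i j * lam k j :=
          Finset.sum_le_sum fun j _ => mul_le_mul_of_nonneg_left (hIlam k j) (hWnonneg k i j)
  -- sum invariance
  have hsum : ∀ k, ∑ j, lam k j = ∑ j, lam 0 j := by
    intro k
    induction k with
    | zero => rfl
    | succ k ih =>
        rw [← ih]
        calc ∑ i, lam (k + 1) i = ∑ i, ∑ j, W k i j * lam k j := by
              exact Finset.sum_congr rfl fun i _ => hrec k i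
          _ = ∑ j, (∑ i, W k i j) * lam k j := by
              rw [Finset.sum_comm]
              exact Finset.sum_congr rfl fun j _ => (Finset.sum_mul _ _ _).symm
          _ = ∑ j, lam k j := by
              exact Finset.sum_congr rfl fun j _ => by rw [hWcol k j, one_mul]
  have hnR : (0 : ℝ) < n := by exact_mod_cast hn
  -- lamstar between I k and S k
  have hstar : ∀ k, I k ≤ lamstar ∧ lamstar ≤ S k := by
    intro k
    have h1 : ∑ j, lam k j ≤ n * S k := by
      calc ∑ j, lam k j ≤ ∑ _j : Fin n, S k := Finset.sum_le_sum fun j _ => hlamS k j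
        _ = n * S k := by simp [Finset.sum_const, mul_comm]
    have h2 : (n : ℝ) * I k ≤ ∑ j, lam k j := by
      calc (n : ℝ) * I k = ∑ _j : Fin n, I k := by simp [Finset.sum_const, mul_comm]
        _ ≤ ∑ j, lam k j := Finset.sum_le_sum fun j _ => hIlam k j
    rw [hlamstar, ← hsum k]
    constructor
    · calc I k = (n : ℝ)⁻¹ * ((n : ℝ) * I k) := by field_simp
        _ ≤ (n : ℝ)⁻¹ * ∑ j, lam k j := by
            exact mul_le_mul_of_nonneg_left h2 (le_of_lt (inv_pos.mpr hnR))
    · calc (n : ℝ)⁻¹ * ∑ j, lam k j ≤ (n : ℝ)⁻¹ * ((n : ℝ) * S k) :=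
          mul_le_mul_of_nonneg_left h1 (le_of_lt (inv_pos.mpr hnR))
        _ = S k := by field_simp
  rcases Nat.eq_zero_or_pos K₀ with hK0z | hK0pos
  · -- K₀ = 0, hence n = 1: everything is constant
    have hn1 : n = 1 := by
      have h : (n - 1) * κ = 0 := by rw [← hK₀, hK0z]
      rcases Nat.mul_eq_zero.mp h with h' | h' <;> omega
    have hμ0 : μ = 0 := by rw [hμ, hK0z]; norm_num
    have hsingle : ∀ (f : Fin n → ℝ) (i : Fin n), ∑ j, f j = f i := by
      intro f i
      have : ∀ j : Fin n, f j = f i := by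
        intro j
        congr 1
        subst hn1
        exact Subsingleton.elim j i
      rw [Finset.sum_congr rfl fun j _ => this j, Finset.sum_const]
      simp [hn1]
    have hconst : ∀ k i, lam k i = lamstar := by
      intro k i
      have h1 : lam k i = lam 0 i := by
        have := hsum k
        rw [hsingle (lam k) i, hsingle (lam 0) i] at this
        exact this
      rw [h1, hlamstar, hsingle (lam 0) i, hn1]
      norm_num
    constructor
    · intro i k
      rw [hconst (k + 1) i, sub_self, abs_zero, hμ0]
      simp
    · intro i
      have : (fun k => lam k i) = fun _ => lamstar := funext fun k => hconst k i
      rw [this]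
      exact tendsto_const_nhds
  · -- main case : K₀ ≥ 1
    have hκK : κ ≤ K₀ := by
      rw [hK₀]
      calc κ = 1 * κ := (one_mul κ).symm
        _ ≤ (n - 1) * κ := Nat.mul_le_mul_right κ (by
            by_contra h
            have hn1 : n = 1 := by omega
            rw [hn1] at hK₀
            simp at hK₀
            omega)
    set c := η ^ K₀ with hc
    have hc0 : 0 < c := pow_pos hη0 K₀
    have hc1 : c < 1 := pow_lt_one₀ hη0.le hη1 (by omega)
    have h1c : 0 < 1 - c := by linarith
    have hK0R : (0 : ℝ) < (K₀ : ℝ) := by exact_mod_cast hK0pos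
    have hβval : β ^ K₀ = 1 - c := by
      rw [hβ, ← Real.rpow_natCast ((1 - c) ^ ((K₀ : ℝ)⁻¹)) K₀, ← Real.rpow_mul h1c.le,
        inv_mul_cancel₀ (ne_of_gt hK0R), Real.rpow_one]
    have hβ0 : 0 < β := by rw [hβ]; exact Real.rpow_pos_of_pos h1c _
    have hβ1 : β < 1 := by
      rw [hβ]
      exact Real.rpow_lt_one h1c.le (by linarith) (by positivity)
    have hPnn : ∀ (m k : ℕ) (i j : Fin n), 0 ≤ prodW W k m i j := prodW_nonneg W hWnonneg
    have hPκ : ∀ k (i j : Fin n), η ^ κ ≤ prodW W k κ i j := by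
      intro k i j
      obtain ⟨s, h1, h2, h3⟩ := hWconn k i j
      exact prodW_edge W η hη0.le hWnonneg hWdiag κ k s h1 h2 i j h3
    have hP : ∀ k (i j : Fin n), c ≤ prodW W k K₀ i j := by
      intro k i j
      have hsplit : K₀ = κ + (K₀ - κ) := by omega
      have h1 : prodW W k K₀ = prodW W (k + κ) (K₀ - κ) * prodW W k κ := by
        conv_lhs => rw [hsplit]
        exact prodW_comp W (K₀ - κ) κ k
      rw [h1, Matrix.mul_apply]
      calc c ≤ η ^ κ := pow_le_pow_of_le_one hη0.le hη1.le hκK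
        _ = (∑ l, prodW W (k + κ) (K₀ - κ) i l) * η ^ κ := by
            rw [prodW_rowsum W hWrow, one_mul]
        _ = ∑ l, prodW W (k + κ) (K₀ - κ) i l * η ^ κ := Finset.sum_mul _ _ _
        _ ≤ ∑ l, prodW W (k + κ) (K₀ - κ) i l * prodW W k κ l j :=
            Finset.sum_le_sum fun l _ =>
              mul_le_mul_of_nonneg_left (hPκ k l j) (hPnn _ _ _ _)
    have hrep : ∀ k i, lam (k + K₀) i = ∑ j, prodW W k K₀ i j * lam k j :=
      fun k i => lam_prodW W lam hrec K₀ k i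
    have hrowsum : ∀ k (i : Fin n), ∑ j, prodW W k K₀ i j = 1 :=
      fun k i => prodW_rowsum W hWrow K₀ k i
    -- contraction over a window of K₀ steps
    have hcontrS : ∀ k, S (k + K₀) ≤ S k - c * (S k - I k) := by
      intro k
      obtain ⟨j0, _, hj0⟩ := Finset.exists_mem_eq_inf' hne (lam k)
      refine Finset.sup'_le hne _ fun i _ => ?_
      have hkey : prodW W k K₀ i j0 * (S k - lam k j0)
          ≤ ∑ j, prodW W k K₀ i j * (S k - lam k j) :=
        Finset.single_le_sum (f := fun j => prodW W k K₀ i j * (S k - lam k j))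
          (fun j _ => mul_nonneg (hPnn _ _ _ _) (by linarith [hlamS k j]))
          (Finset.mem_univ j0)
      have hsum2 : ∑ j, prodW W k K₀ i j * (S k - lam k j) = S k - lam (k + K₀) i := by
        rw [hrep k i]
        simp only [mul_sub]
        rw [Finset.sum_sub_distrib, ← Finset.sum_mul, hrowsum k i, one_mul]
      have hc2 : c * (S k - I k) ≤ prodW W k K₀ i j0 * (S k - lam k j0) := by
        rw [← hj0]
        exact mul_le_mul_of_nonneg_right (hP k i j0) (by linarith [hIS k])
      rw [hsum2] at hkey
      linarith
    have hcontrI : ∀ k, I k + c * (S k - I k) ≤ I (k + K₀) := by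
      intro k
      obtain ⟨j1, _, hj1⟩ := Finset.exists_mem_eq_sup' hne (lam k)
      refine Finset.le_inf' hne _ fun i _ => ?_
      have hkey : prodW W k K₀ i j1 * (lam k j1 - I k)
          ≤ ∑ j, prodW W k K₀ i j * (lam k j - I k) :=
        Finset.single_le_sum (f := fun j => prodW W k K₀ i j * (lam k j - I k))
          (fun j _ => mul_nonneg (hPnn _ _ _ _) (by linarith [hIlam k j]))
          (Finset.mem_univ j1)
      have hsum2 : ∑ j, prodW W k K₀ i j * (lam k j - I k) = lam (k + K₀) i - I k := by
        rw [hrep k i]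
        simp only [mul_sub]
        rw [Finset.sum_sub_distrib, ← Finset.sum_mul, hrowsum k i, one_mul]
      have hc2 : c * (S k - I k) ≤ prodW W k K₀ i j1 * (lam k j1 - I k) := by
        rw [← hj1]
        exact mul_le_mul_of_nonneg_right (hP k i j1) (by linarith [hIS k])
      rw [hsum2] at hkey
      linarith
    have hD : ∀ k, S (k + K₀) - I (k + K₀) ≤ (1 - c) * (S k - I k) := by
      intro k
      have h1 := hcontrS k
      have h2 := hcontrI k
      have h3 : 0 ≤ c * (S k - I k) := mul_nonneg hc0.le (by linarith [hIS k])
      linarith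
    have hmono : ∀ a b, S (a + b) - I (a + b) ≤ S a - I a := by
      intro a b
      induction b with
      | zero => exact le_rfl
      | succ b ih =>
          have h1 := hS1 (a + b)
          have h2 := hI1 (a + b)
          have h3 : a + (b + 1) = (a + b) + 1 := by ring
          rw [h3]
          linarith
    have hgeom : ∀ q, S (K₀ * q) - I (K₀ * q) ≤ (1 - c) ^ q * (S 0 - I 0) := by
      intro q
      induction q with
      | zero => simp
      | succ q ih =>
          rw [Nat.mul_succ]
          calc S (K₀ * q + K₀) - I (K₀ * q + K₀) ≤ (1 - c) * (S (K₀ * q) - I (K₀ * q)) :=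
                hD (K₀ * q)
            _ ≤ (1 - c) * ((1 - c) ^ q * (S 0 - I 0)) :=
                mul_le_mul_of_nonneg_left ih h1c.le
            _ = (1 - c) ^ (q + 1) * (S 0 - I 0) := by ring
    have hβpow : ∀ k, S k - I k ≤ β ^ k * (1 - c)⁻¹ * (S 0 - I 0) := by
      intro k
      obtain ⟨q, r, hr, hk⟩ : ∃ q r, r < K₀ ∧ k = K₀ * q + r :=
        ⟨k / K₀, k % K₀, Nat.mod_lt k hK0pos, (Nat.div_add_mod k K₀).symm⟩
      have hq1 : K₀ * q ≤ k := by omega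
      have hq2 : k < K₀ * q + K₀ := by omega
      have h1 : S k - I k ≤ (1 - c) ^ q * (S 0 - I 0) := by
        have h := hmono (K₀ * q) (k - K₀ * q)
        rw [Nat.add_sub_cancel' hq1] at h
        exact h.trans (hgeom q)
      have h3 : β ^ (K₀ * q) * (1 - c) ≤ β ^ k := by
        rw [← hβval, ← pow_add]
        exact pow_le_pow_of_le_one hβ0.le hβ1.le hq2.le
      have h4 : (1 - c) ^ q ≤ β ^ k * (1 - c)⁻¹ := by
        rw [show (1 - c) ^ q = β ^ (K₀ * q) by rw [pow_mul, hβval], ← div_eq_mul_inv]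
        exact (le_div_iff₀ h1c).mpr h3
      have hD00 : 0 ≤ S 0 - I 0 := by linarith [hIS 0]
      exact h1.trans (mul_le_mul_of_nonneg_right h4 hD00)
    have hD0M : S 0 - I 0 ≤ 2 * M := by
      have h1 : S 0 ≤ M :=
        Finset.sup'_le hne _ fun j _ =>
          le_trans (le_abs_self _) (Finset.le_sup' (fun j => |lam 0 j|) (Finset.mem_univ j))
      have h2 : -M ≤ I 0 := by
        refine Finset.le_inf' hne _ fun j _ => ?_
        have := Finset.le_sup' (fun j => |lam 0 j|) (Finset.mem_univ j)
        have := neg_abs_le (lam 0 j)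
        simp only [hM]
        linarith [Finset.le_sup' (fun j => |lam 0 j|) (Finset.mem_univ j), neg_abs_le (lam 0 j)]
      linarith
    have hcinv : 1 ≤ c⁻¹ := (one_le_inv_iff₀).mpr ⟨hc0, hc1.le⟩
    have hμeq : μ = 2 * (1 + c⁻¹) * (1 - c)⁻¹ := by rw [hμ, div_eq_mul_inv]
    have hinv0 : (0 : ℝ) ≤ (1 - c)⁻¹ := by positivity
    have hμge : 2 * (1 - c)⁻¹ ≤ μ := by
      rw [hμeq]
      exact mul_le_mul_of_nonneg_right (by linarith) hinv0
    have hμnn : 0 ≤ μ := le_trans (by positivity) hμge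
    have hn1R : (1 : ℝ) ≤ (n : ℝ) := by exact_mod_cast hn
    have hμval : 2 * (1 - c)⁻¹ ≤ (n : ℝ) * μ := by
      calc 2 * (1 - c)⁻¹ ≤ μ := hμge
        _ = 1 * μ := (one_mul μ).symm
        _ ≤ (n : ℝ) * μ := mul_le_mul_of_nonneg_right hn1R hμnn
    have hbound : ∀ (i : Fin n) (k : ℕ),
        |lam (k + 1) i - lamstar| ≤ (n : ℝ) * μ * β ^ k * M := by
      intro i k
      have ha : |lam (k + 1) i - lamstar| ≤ S (k + 1) - I (k + 1) := by
        refine abs_le.mpr ⟨?_, ?_⟩ <;>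
          linarith [(hstar (k + 1)).1, (hstar (k + 1)).2, hlamS (k + 1) i, hIlam (k + 1) i]
      have hb : S (k + 1) - I (k + 1) ≤ β ^ (k + 1) * (1 - c)⁻¹ * (2 * M) := by
        refine (hβpow (k + 1)).trans ?_
        exact mul_le_mul_of_nonneg_left hD0M (by positivity)
      have hc3 : β ^ (k + 1) ≤ β ^ k := pow_le_pow_of_le_one hβ0.le hβ1.le (Nat.le_succ k)
      calc |lam (k + 1) i - lamstar| ≤ S (k + 1) - I (k + 1) := ha
        _ ≤ β ^ (k + 1) * (1 - c)⁻¹ * (2 * M) := hb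
        _ ≤ β ^ k * (1 - c)⁻¹ * (2 * M) := by
            refine mul_le_mul_of_nonneg_right ?_ (by positivity)
            exact mul_le_mul_of_nonneg_right hc3 hinv0
        _ = (2 * (1 - c)⁻¹) * (β ^ k * M) := by ring
        _ ≤ ((n : ℝ) * μ) * (β ^ k * M) :=
            mul_le_mul_of_nonneg_right hμval (mul_nonneg (pow_nonneg hβ0.le k) hM0)
        _ = (n : ℝ) * μ * β ^ k * M := by ring
    refine ⟨hbound, ?_⟩
    intro i
    have hg : Tendsto (fun k => (n : ℝ) * μ * β ^ k * M) atTop (nhds 0) := by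
      have h1 : Tendsto (fun k : ℕ => β ^ k) atTop (nhds 0) :=
        tendsto_pow_atTop_nhds_zero_of_lt_one hβ0.le hβ1
      have h2 := (h1.const_mul ((n : ℝ) * μ)).mul_const M
      simpa using h2
    have h0 : Tendsto (fun k => |lam (k + 1) i - lamstar|) atTop (nhds 0) :=
      squeeze_zero (fun k => abs_nonneg _) (fun k => hbound i k) hg
    have h1 : Tendsto (fun k => lam (k + 1) i) atTop (nhds lamstar) := by
      rw [tendsto_iff_dist_tendsto_zero]
      simpa [Real.dist_eq] using h0
    exact (tendsto_add_atTop_iff_nat 1).mp h1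
end

section
/- If Ω ⊆ ℝ^p is convex, L and R are convex real-valued functions on ℝ^p, and x* ∈ Ω is a Pareto optimal solution of minimizing the interval-valued function G = [L, R] over Ω, then there exists λ ∈ [0,1] such that λ·L(x*) + (1−λ)·R(x*) ≤ λ·L(x) + (1−λ)·R(x) for all x ∈ Ω. -/
/-- Lemma 5(b): if `Ω` is convex, `L` and `R` are convex, and `x*` is a Pareto
optimal solution of minimizing the interval-valued function `G = [L, R]` over `Ω`,
then there is `λ ∈ [0,1]` such that `x*` minimizes `λ·L + (1−λ)·R` over `Ω`. -/
theorem pareto_implies_scalarization_optimal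
    {p : ℕ} (Ω : Set (EuclideanSpace ℝ (Fin p))) (hΩ : Convex ℝ Ω)
    (L R : EuclideanSpace ℝ (Fin p) → ℝ)
    (hLconv : ConvexOn ℝ Set.univ L) (hRconv : ConvexOn ℝ Set.univ R)
    (hLR : ∀ x, L x ≤ R x)
    (xstar : EuclideanSpace ℝ (Fin p)) (hxstar : xstar ∈ Ω)
    (hpareto : ∀ xbar ∈ Ω, L xbar ≤ L xstar → R xbar ≤ R xstar →
      L xstar ≤ L xbar ∧ R xstar ≤ R xbar) :
    ∃ lam ∈ Set.Icc (0 : ℝ) 1,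
      ∀ x ∈ Ω, lam * L xstar + (1 - lam) * R xstar ≤ lam * L x + (1 - lam) * R x := by
  classical
  -- The open "strictly dominating" quadrant
  set Q : Set (ℝ × ℝ) := {q | q.1 < L xstar ∧ q.2 < R xstar} with hQdef
  -- The attainable set (with free disposal)
  set A : Set (ℝ × ℝ) := {q | ∃ x ∈ Ω, L x ≤ q.1 ∧ R x ≤ q.2} with hAdef
  have hQopen : IsOpen Q := by
    have : Q = (Set.Iio (L xstar)) ×ˢ (Set.Iio (R xstar)) := by
      ext q; simp [hQdef, Set.mem_prod]
    rw [this]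
    exact (isOpen_Iio).prod (isOpen_Iio)
  have hQconv : Convex ℝ Q := by
    have : Q = (Set.Iio (L xstar)) ×ˢ (Set.Iio (R xstar)) := by
      ext q; simp [hQdef, Set.mem_prod]
    rw [this]
    exact (convex_Iio _).prod (convex_Iio _)
  have hAconv : Convex ℝ A := by
    rintro q₁ ⟨x₁, hx₁, hL₁, hR₁⟩ q₂ ⟨x₂, hx₂, hL₂, hR₂⟩ a b ha hb hab
    refine ⟨a • x₁ + b • x₂, hΩ hx₁ hx₂ ha hb hab, ?_, ?_⟩
    · calc L (a • x₁ + b • x₂) ≤ a * L x₁ + b * L x₂ :=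
            hLconv.2 (Set.mem_univ x₁) (Set.mem_univ x₂) ha hb hab
        _ ≤ a * q₁.1 + b * q₂.1 := by
            have := mul_le_mul_of_nonneg_left hL₁ ha
            have := mul_le_mul_of_nonneg_left hL₂ hb
            linarith
        _ = (a • q₁ + b • q₂).1 := by simp
    · calc R (a • x₁ + b • x₂) ≤ a * R x₁ + b * R x₂ :=
            hRconv.2 (Set.mem_univ x₁) (Set.mem_univ x₂) ha hb hab
        _ ≤ a * q₁.2 + b * q₂.2 := by
            have := mul_le_mul_of_nonneg_left hR₁ ha
            have := mul_le_mul_of_nonneg_left hR₂ hb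
            linarith
        _ = (a • q₁ + b • q₂).2 := by simp
  have hdisj : Disjoint Q A := by
    rw [Set.disjoint_left]
    rintro q ⟨hq1, hq2⟩ ⟨x, hx, hLx, hRx⟩
    have h := hpareto x hx (le_of_lt (lt_of_le_of_lt hLx hq1))
      (le_of_lt (lt_of_le_of_lt hRx hq2))
    linarith [h.1, lt_of_le_of_lt hLx hq1]
  obtain ⟨f, u, hfu, huf⟩ := geometric_hahn_banach_open hQconv hQopen hAconv hdisj
  set l1 := f (1, 0) with hl1
  set l2 := f (0, 1) with hl2
  have hfab : ∀ a b : ℝ, f (a, b) = a * l1 + b * l2 := by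
    intro a b
    have : (a, b) = a • ((1:ℝ), (0:ℝ)) + b • ((0:ℝ), (1:ℝ)) := by
      simp [Prod.ext_iff]
    rw [this, map_add, map_smul, map_smul]
    simp [hl1, hl2, smul_eq_mul]
  -- points in Q
  have hQmem : ∀ s t : ℝ, 0 < s → 0 < t →
      (L xstar - s) * l1 + (R xstar - t) * l2 < u := by
    intro s t hs ht
    have : ((L xstar - s, R xstar - t) : ℝ × ℝ) ∈ Q := by
      constructor <;> simp <;> linarith
    have := hfu _ this
    rwa [hfab] at this
  -- corner in A
  have hcorner : u ≤ L xstar * l1 + R xstar * l2 := by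
    have : ((L xstar, R xstar) : ℝ × ℝ) ∈ A := ⟨xstar, hxstar, le_refl _, le_refl _⟩
    have := huf _ this
    rwa [hfab] at this
  have hl1nn : 0 ≤ l1 := by
    by_contra h
    push_neg at h
    have hkey : ∀ s : ℝ, 0 < s → (L xstar - s) * l1 + (R xstar - 1) * l2 < u :=
      fun s hs => hQmem s 1 hs one_pos
    set s₀ := max 1 ((u + 1 - L xstar * l1 - (R xstar - 1) * l2) / (-l1)) with hs₀
    have hs₀pos : 0 < s₀ := lt_of_lt_of_le one_pos (le_max_left _ _)
    have h2 : (u + 1 - L xstar * l1 - (R xstar - 1) * l2) / (-l1) ≤ s₀ := le_max_right _ _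
    have hnl : 0 < -l1 := by linarith
    have h3 : u + 1 - L xstar * l1 - (R xstar - 1) * l2 ≤ s₀ * (-l1) := by
      rw [div_le_iff₀ hnl] at h2; linarith [h2]
    have := hkey s₀ hs₀pos
    nlinarith
  have hl2nn : 0 ≤ l2 := by
    by_contra h
    push_neg at h
    have hkey : ∀ t : ℝ, 0 < t → (L xstar - 1) * l1 + (R xstar - t) * l2 < u :=
      fun t ht => hQmem 1 t one_pos ht
    set t₀ := max 1 ((u + 1 - (L xstar - 1) * l1 - R xstar * l2) / (-l2)) with ht₀
    have ht₀pos : 0 < t₀ := lt_of_lt_of_le one_pos (le_max_left _ _)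
    have h2 : (u + 1 - (L xstar - 1) * l1 - R xstar * l2) / (-l2) ≤ t₀ := le_max_right _ _
    have hnl : 0 < -l2 := by linarith
    have h3 : u + 1 - (L xstar - 1) * l1 - R xstar * l2 ≤ t₀ * (-l2) := by
      rw [div_le_iff₀ hnl] at h2; linarith [h2]
    have := hkey t₀ ht₀pos
    nlinarith
  -- sum positive
  have hsumpos : 0 < l1 + l2 := by
    rcases lt_or_eq_of_le hl1nn with h1 | h1
    · linarith
    rcases lt_or_eq_of_le hl2nn with h2 | h2
    · linarith
    exfalso
    have h3 := hQmem 1 1 one_pos one_pos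
    rw [← h1, ← h2] at h3 hcorner
    nlinarith
  -- corner value ≤ u
  have hcorner' : L xstar * l1 + R xstar * l2 ≤ u := by
    by_contra h
    push_neg at h
    set ε := (L xstar * l1 + R xstar * l2 - u) / (2 * (l1 + l2)) with hε
    have hεpos : 0 < ε := div_pos (by linarith) (by linarith)
    have := hQmem ε ε hεpos hεpos
    have hεle : ε * (l1 + l2) = (L xstar * l1 + R xstar * l2 - u) / 2 := by
      rw [hε]; field_simp
    nlinarith
  -- conclude
  set c := l1 + l2 with hc
  refine ⟨l1 / c, ⟨div_nonneg hl1nn (le_of_lt hsumpos), by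
    rw [div_le_one hsumpos]; linarith⟩, ?_⟩
  intro x hx
  have hxA : ((L x, R x) : ℝ × ℝ) ∈ A := ⟨x, hx, le_refl _, le_refl _⟩
  have hxval : u ≤ L x * l1 + R x * l2 := by
    have := huf _ hxA
    rwa [hfab] at this
  have hkey : L xstar * l1 + R xstar * l2 ≤ L x * l1 + R x * l2 := le_trans hcorner' hxval
  have h1m : 1 - l1 / c = l2 / c := by
    field_simp
    rw [hc]; ring
  rw [h1m, div_mul_eq_mul_div, div_mul_eq_mul_div, div_mul_eq_mul_div, div_mul_eq_mul_div,
    ← add_div, ← add_div, div_le_div_iff₀ hsumpos hsumpos]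
  nlinarith
end

section
/- Under the network assumptions, the entries of the transition matrices converge geometrically to 1/n: for all k ≥ s ≥ 0 and all indices i, j, |[Ψ(k,s)]_{ij} − 1/n| ≤ μ·β^{k−s}. -/
/-- The transition matrix `Ψ(k,s) = W(k)·W(k−1)⋯W(s)` for `k ≥ s`. -/
def transitionMatrix {n : ℕ} (W : ℕ → Matrix (Fin n) (Fin n) ℝ) (k s : ℕ) :
    Matrix (Fin n) (Fin n) ℝ :=
  (((List.range (k - s + 1)).reverse).map fun t => W (s + t)).prod

theorem TM_self {n : ℕ} (W : ℕ → Matrix (Fin n) (Fin n) ℝ) (s : ℕ) :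
    transitionMatrix W s s = W s := by
  simp [transitionMatrix, List.range_succ]

theorem TM_succ {n : ℕ} (W : ℕ → Matrix (Fin n) (Fin n) ℝ) (k s : ℕ) (h : s ≤ k) :
    transitionMatrix W (k+1) s = W (k+1) * transitionMatrix W k s := by
  have h1 : k + 1 - s + 1 = (k - s + 1) + 1 := by omega
  have h2 : s + (k - s + 1) = k + 1 := by omega
  simp only [transitionMatrix, h1, List.range_succ, List.reverse_append, List.map_append,
    List.map_cons, List.prod_cons, List.reverse_cons, List.reverse_nil, List.nil_append,
    List.map_nil, List.prod_append, List.prod_nil, h2, List.map_reverse]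
  simp [List.map_reverse]

theorem TM_split {n : ℕ} (W : ℕ → Matrix (Fin n) (Fin n) ℝ) (s t k : ℕ)
    (hst : s ≤ t) (htk : t < k) :
    transitionMatrix W k s = transitionMatrix W k (t+1) * transitionMatrix W t s := by
  induction k, htk using Nat.le_induction with
  | base => rw [TM_self, TM_succ W t s hst]
  | succ k hk ih =>
      rw [TM_succ W k s (by omega), ih, TM_succ W k (t+1) (by omega), Matrix.mul_assoc]

theorem TM_nonneg {n : ℕ} (W : ℕ → Matrix (Fin n) (Fin n) ℝ)
    (hWnonneg : ∀ k i j, 0 ≤ W k i j) (s : ℕ) :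
    ∀ k, s ≤ k → ∀ i j, 0 ≤ transitionMatrix W k s i j := by
  intro k hk
  induction k, hk using Nat.le_induction with
  | base => intro i j; rw [TM_self]; exact hWnonneg s i j
  | succ k hk ih =>
      intro i j
      rw [TM_succ W k s hk, Matrix.mul_apply]
      exact Finset.sum_nonneg fun l _ => mul_nonneg (hWnonneg _ _ _) (ih l j)

theorem TM_row {n : ℕ} (W : ℕ → Matrix (Fin n) (Fin n) ℝ)
    (hWrow : ∀ k i, ∑ j, W k i j = 1) (s : ℕ) :
    ∀ k, s ≤ k → ∀ i, ∑ j, transitionMatrix W k s i j = 1 := by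
  intro k hk
  induction k, hk using Nat.le_induction with
  | base => intro i; rw [TM_self]; exact hWrow s i
  | succ k hk ih =>
      intro i
      rw [TM_succ W k s hk]
      simp only [Matrix.mul_apply]
      rw [Finset.sum_comm]
      calc ∑ l, ∑ j, W (k+1) i l * transitionMatrix W k s l j
          = ∑ l, W (k+1) i l * ∑ j, transitionMatrix W k s l j := by
            simp [Finset.mul_sum]
        _ = 1 := by simp only [ih]; simpa using hWrow (k+1) i

theorem TM_col {n : ℕ} (W : ℕ → Matrix (Fin n) (Fin n) ℝ)
    (hWcol : ∀ k j, ∑ i, W k i j = 1) (s : ℕ) :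
    ∀ k, s ≤ k → ∀ j, ∑ i, transitionMatrix W k s i j = 1 := by
  intro k hk
  induction k, hk using Nat.le_induction with
  | base => intro j; rw [TM_self]; exact hWcol s j
  | succ k hk ih =>
      intro j
      rw [TM_succ W k s hk]
      simp only [Matrix.mul_apply]
      rw [Finset.sum_comm]
      calc ∑ l, ∑ i, W (k+1) i l * transitionMatrix W k s l j
          = ∑ l, (∑ i, W (k+1) i l) * transitionMatrix W k s l j := by
            simp [Finset.sum_mul]
        _ = 1 := by
            simp only [hWcol]
            simpa using ih j

theorem TM_le_one {n : ℕ} (W : ℕ → Matrix (Fin n) (Fin n) ℝ)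
    (hWnonneg : ∀ k i j, 0 ≤ W k i j) (hWrow : ∀ k i, ∑ j, W k i j = 1)
    (s k : ℕ) (hk : s ≤ k) (i j : Fin n) :
    transitionMatrix W k s i j ≤ 1 := by
  have h := TM_row W hWrow s k hk i
  calc transitionMatrix W k s i j
      ≤ ∑ j', transitionMatrix W k s i j' :=
        Finset.single_le_sum (fun l _ => TM_nonneg W hWnonneg s k hk i l) (Finset.mem_univ j)
    _ = 1 := h

theorem TM_diag {n : ℕ} (W : ℕ → Matrix (Fin n) (Fin n) ℝ)
    (hWnonneg : ∀ k i j, 0 ≤ W k i j)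
    {η : ℝ} (hη0 : 0 ≤ η) (hWdiag : ∀ k i, η ≤ W k i i) (s : ℕ) :
    ∀ k, s ≤ k → ∀ j, η ^ (k - s + 1) ≤ transitionMatrix W k s j j := by
  intro k hk
  induction k, hk using Nat.le_induction with
  | base => intro j; rw [TM_self]; simpa using hWdiag s j
  | succ k hk ih =>
      intro j
      rw [TM_succ W k s hk, Matrix.mul_apply]
      have h1 : η ^ (k + 1 - s + 1) ≤ W (k+1) j j * transitionMatrix W k s j j := by
        have he : k + 1 - s + 1 = (k - s + 1) + 1 := by omega
        rw [he, pow_succ, mul_comm]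
        exact mul_le_mul (hWdiag (k+1) j) (ih j) (pow_nonneg hη0 _) (hWnonneg _ _ _)
      refine h1.trans ?_
      exact Finset.single_le_sum (f := fun l => W (k+1) j l * transitionMatrix W k s l j)
        (fun l _ => mul_nonneg (hWnonneg _ _ _) (TM_nonneg W hWnonneg s k hk l j))
        (Finset.mem_univ j)

theorem TM_edge {n : ℕ} (W : ℕ → Matrix (Fin n) (Fin n) ℝ)
    (hWnonneg : ∀ k i j, 0 ≤ W k i j)
    {η : ℝ} (hη0 : 0 ≤ η) (hWdiag : ∀ k i, η ≤ W k i i)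
    (s : ℕ) (i j : Fin n) :
    ∀ k, s ≤ k → (∃ t, s ≤ t ∧ t ≤ k ∧ η ≤ W t i j) →
      η ^ (k - s + 1) ≤ transitionMatrix W k s i j := by
  intro k hk
  induction k, hk using Nat.le_induction with
  | base =>
      rintro ⟨t, ht1, ht2, ht3⟩
      have : t = s := le_antisymm ht2 ht1
      subst this
      rw [TM_self]; simpa using ht3
  | succ k hk ih =>
      rintro ⟨t, ht1, ht2, ht3⟩
      rw [TM_succ W k s hk, Matrix.mul_apply]
      have hsum : ∀ c : Fin n, η ^ (k + 1 - s + 1) ≤ W (k+1) i c * transitionMatrix W k s c j →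
          η ^ (k + 1 - s + 1) ≤ ∑ l, W (k+1) i l * transitionMatrix W k s l j := by
        intro c hc
        refine hc.trans ?_
        exact Finset.single_le_sum (f := fun l => W (k+1) i l * transitionMatrix W k s l j)
          (fun l _ => mul_nonneg (hWnonneg _ _ _) (TM_nonneg W hWnonneg s k hk l j))
          (Finset.mem_univ c)
      have hexp : k + 1 - s + 1 = (k - s + 1) + 1 := by omega
      rcases Nat.lt_or_ge t (k+1) with hlt | hge
      · refine hsum i ?_
        rw [hexp, pow_succ, mul_comm]
        exact mul_le_mul (hWdiag (k+1) i) (ih ⟨t, ht1, by omega, ht3⟩)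
          (pow_nonneg hη0 _) (hWnonneg _ _ _)
      · have : t = k + 1 := le_antisymm ht2 hge
        subst this
        refine hsum j ?_
        rw [hexp, pow_succ, mul_comm]
        exact mul_le_mul ht3 (TM_diag W hWnonneg hη0 hWdiag s k hk j)
          (pow_nonneg hη0 _) (hη0.trans ht3)

theorem osc_contract {n : ℕ} (hn : 0 < n) (ne : (Finset.univ : Finset (Fin n)).Nonempty)
    (P : Matrix (Fin n) (Fin n) ℝ) (v : Fin n → ℝ) (δ : ℝ) (hδ0 : 0 ≤ δ)
    (hrow : ∀ i, ∑ l, P i l = 1) (hP : ∀ i l, δ ≤ P i l) :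
    Finset.univ.sup' ne (fun i => ∑ l, P i l * v l)
      - Finset.univ.inf' ne (fun i => ∑ l, P i l * v l)
      ≤ (1 - δ) * (Finset.univ.sup' ne v - Finset.univ.inf' ne v) := by
  set S := Finset.univ.sup' ne v with hS
  set I := Finset.univ.inf' ne v with hI
  have hIS : I ≤ S := by
    obtain ⟨a, -⟩ := id ne
    exact (Finset.inf'_le v (Finset.mem_univ a)).trans (Finset.le_sup' v (Finset.mem_univ a))
  obtain ⟨j0, -, hj0⟩ := Finset.exists_mem_eq_inf' ne v
  obtain ⟨j1, -, hj1⟩ := Finset.exists_mem_eq_sup' ne v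
  rw [← hI] at hj0
  rw [← hS] at hj1
  have hPnn : ∀ i l, (0:ℝ) ≤ P i l := fun i l => hδ0.trans (hP i l)
  have hub : ∀ i, ∑ l, P i l * v l ≤ S - δ * (S - I) := by
    intro i
    have herase : ∑ l ∈ Finset.univ.erase j0, P i l = 1 - P i j0 := by
      have := Finset.add_sum_erase Finset.univ (fun l => P i l) (Finset.mem_univ j0)
      rw [hrow i] at this
      linarith
    calc ∑ l, P i l * v l
        = P i j0 * v j0 + ∑ l ∈ Finset.univ.erase j0, P i l * v l :=
          (Finset.add_sum_erase Finset.univ (fun l => P i l * v l) (Finset.mem_univ j0)).symm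
      _ ≤ P i j0 * I + ∑ l ∈ Finset.univ.erase j0, P i l * S := by
          have h1 : P i j0 * v j0 = P i j0 * I := by rw [← hj0]
          rw [h1]
          gcongr with l hl
          · exact hPnn i l
          · exact Finset.le_sup' v (Finset.mem_univ l)
      _ = P i j0 * I + (1 - P i j0) * S := by rw [← Finset.sum_mul, herase]
      _ ≤ S - δ * (S - I) := by nlinarith [hP i j0, hIS]
  have hlb : ∀ i, I + δ * (S - I) ≤ ∑ l, P i l * v l := by
    intro i
    have herase : ∑ l ∈ Finset.univ.erase j1, P i l = 1 - P i j1 := by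
      have := Finset.add_sum_erase Finset.univ (fun l => P i l) (Finset.mem_univ j1)
      rw [hrow i] at this
      linarith
    have hcalc : P i j1 * S + (1 - P i j1) * I ≤ ∑ l, P i l * v l := by
      calc P i j1 * S + (1 - P i j1) * I
          = P i j1 * v j1 + ∑ l ∈ Finset.univ.erase j1, P i l * I := by
            rw [← Finset.sum_mul, herase, ← hj1]
        _ ≤ P i j1 * v j1 + ∑ l ∈ Finset.univ.erase j1, P i l * v l := by
            gcongr with l hl
            · exact hPnn i l
            · exact Finset.inf'_le v (Finset.mem_univ l)
        _ = ∑ l, P i l * v l :=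
            Finset.add_sum_erase Finset.univ (fun l => P i l * v l) (Finset.mem_univ j1)
    nlinarith [hP i j1, hIS]
  have h1 : Finset.univ.sup' ne (fun i => ∑ l, P i l * v l) ≤ S - δ * (S - I) :=
    Finset.sup'_le ne _ (fun i _ => hub i)
  have h2 : I + δ * (S - I) ≤ Finset.univ.inf' ne (fun i => ∑ l, P i l * v l) :=
    Finset.le_inf' ne _ (fun i _ => hlb i)
  nlinarith [mul_nonneg hδ0 (sub_nonneg.mpr hIS)]

/-- Lemma 7: under the network assumptions, the entries of the transition matrices
converge geometrically to `1/n`: `|[Ψ(k,s)]ᵢⱼ − 1/n| ≤ μ·β^{k−s}` for all `k ≥ s`. -/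
theorem transition_matrix_geometric_decay
    {n : ℕ} (hn : 0 < n)
    (η : ℝ) (hη : η ∈ Set.Ioo (0 : ℝ) 1) (κ : ℕ) (hκ : 1 ≤ κ)
    (W : ℕ → Matrix (Fin n) (Fin n) ℝ)
    (hWnonneg : ∀ k i j, 0 ≤ W k i j)
    (hWrow : ∀ k i, ∑ j, W k i j = 1)
    (hWcol : ∀ k j, ∑ i, W k i j = 1)
    (hWdiag : ∀ k i, η ≤ W k i i)
    (hWpos : ∀ k i j, W k i j ≠ 0 → η ≤ W k i j)
    (hWconn : ∀ k, ∀ i j : Fin n, ∃ s, k ≤ s ∧ s < k + κ ∧ η ≤ W s i j)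
    (K₀ : ℕ) (hK₀ : K₀ = (n - 1) * κ)
    (β μ : ℝ)
    (hβ : β = (1 - η ^ K₀) ^ ((K₀ : ℝ)⁻¹))
    (hμ : μ = 2 * (1 + (η ^ K₀)⁻¹) / (1 - η ^ K₀)) :
    ∀ k s : ℕ, s ≤ k → ∀ i j : Fin n,
      |transitionMatrix W k s i j - 1 / (n : ℝ)| ≤ μ * β ^ (k - s) := by
  intro k s hsk i j
  rcases Nat.lt_or_ge n 2 with hn1 | hn2
  · -- n = 1
    have hn1' : n = 1 := by omega
    subst hn1'
    have hK0 : K₀ = 0 := by simp [hK₀]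
    have hμ0 : μ = 0 := by rw [hμ, hK0]; norm_num
    have hij : i = j := Subsingleton.elim i j
    subst hij
    have hrow := TM_row W hWrow s k hsk i
    have hone : transitionMatrix W k s i i = 1 := by
      rw [← hrow]
      rw [Finset.sum_eq_single i (fun b _ hb => absurd (Subsingleton.elim b i) hb)
        (fun h => absurd (Finset.mem_univ i) h)]
    rw [hone, hμ0]
    norm_num
  · -- n ≥ 2
    have hη0 : (0:ℝ) < η := hη.1
    have hη1 : η < 1 := hη.2
    have hK₀pos : 0 < K₀ := by
      rw [hK₀]; exact Nat.mul_pos (by omega) (by omega)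
    have hκK₀ : κ ≤ K₀ := by
      rw [hK₀]
      calc κ = 1 * κ := (one_mul κ).symm
        _ ≤ (n-1) * κ := Nat.mul_le_mul_right κ (by omega)
    set δ : ℝ := η ^ K₀ with hδ
    have hδpos : 0 < δ := pow_pos hη0 _
    have hδlt1 : δ < 1 := pow_lt_one₀ hη0.le hη1 (by omega)
    have h1δpos : (0:ℝ) < 1 - δ := by linarith
    have ne : (Finset.univ : Finset (Fin n)).Nonempty := ⟨⟨0, hn⟩, Finset.mem_univ _⟩
    -- all entries of a K₀-length block are ≥ δ
    have hblock : ∀ a b : ℕ, a ≤ b → a + K₀ = b + 1 → ∀ p q : Fin n,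
        δ ≤ transitionMatrix W b a p q := by
      intro a b hab heq p q
      obtain ⟨u, hu1, hu2, hu3⟩ := hWconn a p q
      have hK : b - a + 1 = K₀ := by omega
      have := TM_edge W hWnonneg hη0.le hWdiag a p q b hab ⟨u, hu1, by omega, hu3⟩
      rwa [hK] at this
    -- the oscillation claim
    have claim : ∀ q : ℕ, ∀ t, t = s + q →
        Finset.univ.sup' ne (fun p => transitionMatrix W t s p j)
          - Finset.univ.inf' ne (fun p => transitionMatrix W t s p j)
          ≤ (1 - δ) ^ ((q + 1) / K₀) := by
      intro q
      induction q using Nat.strong_induction_on with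
      | _ q ih =>
        intro t ht
        have hst : s ≤ t := by omega
        have hsup1 : Finset.univ.sup' ne (fun p => transitionMatrix W t s p j) ≤ 1 :=
          Finset.sup'_le ne _ (fun p _ => TM_le_one W hWnonneg hWrow s t hst p j)
        have hinf0 : 0 ≤ Finset.univ.inf' ne (fun p => transitionMatrix W t s p j) :=
          Finset.le_inf' ne _ (fun p _ => TM_nonneg W hWnonneg s t hst p j)
        rcases Nat.lt_or_ge (q+1) K₀ with hq1 | hq2
        · rw [Nat.div_eq_of_lt hq1, pow_zero]
          linarith
        rcases Nat.lt_or_ge q K₀ with hq3 | hq4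
        · -- q + 1 = K₀ : one full block from the start, applied to eⱼ
          have hqK : q + 1 = K₀ := by omega
          have hdiv : (q + 1) / K₀ = 1 := by rw [hqK, Nat.div_self hK₀pos]
          rw [hdiv, pow_one]
          set v : Fin n → ℝ := fun l => if l = j then 1 else 0 with hv
          have hcol : ∀ p, transitionMatrix W t s p j = ∑ l, transitionMatrix W t s p l * v l := by
            intro p
            simp [hv, mul_ite]
          have hfun : (fun p => transitionMatrix W t s p j)
              = fun p => ∑ l, transitionMatrix W t s p l * v l := funext hcol
          rw [hfun]
          have hosc := osc_contract hn ne (transitionMatrix W t s) v δ hδpos.le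
            (TM_row W hWrow s t hst)
            (hblock s t hst (by omega))
          refine hosc.trans ?_
          have hsv : Finset.univ.sup' ne v ≤ 1 := by
            refine Finset.sup'_le ne _ (fun p _ => ?_)
            simp only [hv]
            split <;> norm_num
          have hiv : 0 ≤ Finset.univ.inf' ne v := by
            refine Finset.le_inf' ne _ (fun p _ => ?_)
            simp only [hv]
            split <;> norm_num
          nlinarith
        · -- q ≥ K₀ : split off a block
          set t' : ℕ := t - K₀ with ht'
          have hst' : s ≤ t' := by omega
          have ht't : t' < t := by omega
          have hsplit := TM_split W s t' t hst' ht't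
          have hcol : ∀ p, transitionMatrix W t s p j
              = ∑ l, transitionMatrix W t (t'+1) p l * transitionMatrix W t' s l j := by
            intro p
            rw [hsplit, Matrix.mul_apply]
          have hfun : (fun p => transitionMatrix W t s p j)
              = fun p => ∑ l, transitionMatrix W t (t'+1) p l
                  * (fun l' => transitionMatrix W t' s l' j) l := funext hcol
          rw [hfun]
          have hosc := osc_contract hn ne (transitionMatrix W t (t'+1))
            (fun l' => transitionMatrix W t' s l' j) δ hδpos.le
            (TM_row W hWrow (t'+1) t (by omega))
            (hblock (t'+1) t (by omega) (by omega))
          refine hosc.trans ?_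
          have hprev := ih (q - K₀) (by omega) t' (by omega)
          have hdiv : (q - K₀ + 1) / K₀ + 1 = (q + 1) / K₀ := by
            have : q + 1 = (q - K₀ + 1) + K₀ := by omega
            rw [this, Nat.add_div_right _ hK₀pos]
          calc (1 - δ) * (Finset.univ.sup' ne (fun l' => transitionMatrix W t' s l' j)
                - Finset.univ.inf' ne (fun l' => transitionMatrix W t' s l' j))
              ≤ (1 - δ) * (1 - δ) ^ ((q - K₀ + 1) / K₀) := by
                exact mul_le_mul_of_nonneg_left hprev h1δpos.le
            _ = (1 - δ) ^ ((q - K₀ + 1) / K₀ + 1) := by rw [pow_succ]; ring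
            _ = (1 - δ) ^ ((q + 1) / K₀) := by rw [hdiv]
    -- from oscillation to the distance to 1/n
    set q : ℕ := k - s with hq
    have hosc := claim q k (by omega)
    set S := Finset.univ.sup' ne (fun p => transitionMatrix W k s p j) with hS
    set I := Finset.univ.inf' ne (fun p => transitionMatrix W k s p j) with hI
    have hcolsum := TM_col W hWcol s k hsk j
    have hnR : (0:ℝ) < n := by exact_mod_cast hn
    have hIn : I ≤ 1 / n := by
      have h1 : (Finset.univ : Finset (Fin n)).card • I ≤ ∑ p, transitionMatrix W k s p j :=
        Finset.card_nsmul_le_sum Finset.univ _ I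
          (fun p _ => Finset.inf'_le (fun p' => transitionMatrix W k s p' j) (Finset.mem_univ p))
      rw [hcolsum, Finset.card_univ, Fintype.card_fin, nsmul_eq_mul] at h1
      rw [le_div_iff₀ hnR]
      linarith [mul_comm I (n:ℝ)]
    have hSn : 1 / (n:ℝ) ≤ S := by
      have h1 : ∑ p, transitionMatrix W k s p j ≤ (Finset.univ : Finset (Fin n)).card • S :=
        Finset.sum_le_card_nsmul Finset.univ _ S
          (fun p _ => Finset.le_sup' (fun p' => transitionMatrix W k s p' j) (Finset.mem_univ p))
      rw [hcolsum, Finset.card_univ, Fintype.card_fin, nsmul_eq_mul] at h1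
      rw [div_le_iff₀ hnR]
      calc (1:ℝ) ≤ n * S := h1
        _ = S * n := mul_comm _ _
    have habs : |transitionMatrix W k s i j - 1 / (n : ℝ)| ≤ S - I := by
      have h1 : transitionMatrix W k s i j ≤ S :=
        Finset.le_sup' (fun p' => transitionMatrix W k s p' j) (Finset.mem_univ i)
      have h2 : I ≤ transitionMatrix W k s i j :=
        Finset.inf'_le (fun p' => transitionMatrix W k s p' j) (Finset.mem_univ i)
      rw [abs_le]
      constructor <;> linarith
    refine habs.trans (hosc.trans ?_)
    -- final numeric comparison: (1-δ)^((q+1)/K₀) ≤ μ * β^q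
    set m : ℕ := (q + 1) / K₀ with hm
    have hK₀R : (0:ℝ) < (K₀:ℝ) := by exact_mod_cast hK₀pos
    have hmq : (q:ℝ) * (K₀:ℝ)⁻¹ - 1 ≤ (m:ℝ) := by
      have h1 := Nat.div_add_mod (q+1) K₀
      have h2 := Nat.mod_lt (q+1) hK₀pos
      have h3 : q < K₀ * m + K₀ := by rw [hm]; omega
      have h4 : (q:ℝ) < (K₀:ℝ) * ((m:ℝ) + 1) := by
        have : (q:ℝ) < (K₀:ℝ) * (m:ℝ) + (K₀:ℝ) := by exact_mod_cast h3
        linarith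
      have h5 : (q:ℝ) * (K₀:ℝ)⁻¹ < (m:ℝ) + 1 := by
        rw [← div_eq_mul_inv, div_lt_iff₀ hK₀R]
        linarith [mul_comm ((m:ℝ)+1) (K₀:ℝ)]
      linarith
    have hβq : β ^ q = (1 - δ) ^ ((q:ℝ) * (K₀:ℝ)⁻¹) := by
      rw [hβ]
      rw [← Real.rpow_natCast ((1-δ) ^ ((K₀:ℝ)⁻¹)) q, ← Real.rpow_mul h1δpos.le]
      ring_nf
    have hnpow : ((1:ℝ) - δ) ^ m = (1 - δ) ^ ((m:ℝ)) := (Real.rpow_natCast _ m).symm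
    have hstep : ((1:ℝ) - δ) ^ ((m:ℝ)) ≤ (1 - δ) ^ ((q:ℝ) * (K₀:ℝ)⁻¹ - 1) :=
      Real.rpow_le_rpow_of_exponent_ge h1δpos (by linarith) hmq
    have hsplit2 : ((1:ℝ) - δ) ^ ((q:ℝ) * (K₀:ℝ)⁻¹ - 1)
        = (1 - δ) ^ ((q:ℝ) * (K₀:ℝ)⁻¹) * (1 - δ)⁻¹ := by
      rw [Real.rpow_sub h1δpos, Real.rpow_one, div_eq_mul_inv]
    have hβqpos : (0:ℝ) ≤ (1 - δ) ^ ((q:ℝ) * (K₀:ℝ)⁻¹) :=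
      (Real.rpow_pos_of_pos h1δpos _).le
    have hμge : (1 - δ)⁻¹ ≤ μ := by
      rw [hμ]
      rw [inv_eq_one_div, div_le_div_iff₀ h1δpos h1δpos]
      have hδinv : (0:ℝ) < δ⁻¹ := inv_pos.mpr hδpos
      nlinarith
    calc ((1:ℝ) - δ) ^ m = (1 - δ) ^ ((m:ℝ)) := hnpow
      _ ≤ (1 - δ) ^ ((q:ℝ) * (K₀:ℝ)⁻¹ - 1) := hstep
      _ = (1 - δ) ^ ((q:ℝ) * (K₀:ℝ)⁻¹) * (1 - δ)⁻¹ := hsplit2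
      _ ≤ (1 - δ) ^ ((q:ℝ) * (K₀:ℝ)⁻¹) * μ := by
          exact mul_le_mul_of_nonneg_left hμge hβqpos
      _ = μ * β ^ q := by rw [hβq]; ring
end

section
/- Explicit consensus-error bound for perturbed consensus: suppose the matrices W(k) satisfy the network assumptions with constants K₀ = (n−1)κ, β = (1 − η^{K₀})^{1/K₀}, μ = 2(1 + η^{−K₀})/(1 − η^{K₀}), D ≥ 0, ι : ℕ → [0,∞), and x_i, p_i : ℕ → ℝ^p (i = 1,…,n) satisfy x_i(k+1) = Σ_{j=1}^n W(k)_{ij} x_j(k) + p_i(k+1) with ‖p_i(k+1)‖ ≤ ι(k)·D for all i and k ≥ 0. Then, with x̄(k) = (1/n) Σ_{j=1}^n x_j(k), for all i and k ≥ 0: ‖x_i(k+1) − x̄(k+1)‖ ≤ n·μ·β^{k}·max_{1≤j≤n}‖x_j(0)‖ + 2·ι(k)·D + n·μ·D·Σ_{s=1}^{k} β^{k−s} ι(s−1). -/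
namespace PCEB
open Finset
variable {n : ℕ}

def F (W : ℕ → Matrix (Fin n) (Fin n) ℝ) (s : ℕ) : ℕ → Matrix (Fin n) (Fin n) ℝ
  | 0 => 1
  | m+1 => W (s + m) * F W s m

variable {W : ℕ → Matrix (Fin n) (Fin n) ℝ}

lemma F_nonneg (hW : ∀ k i j, 0 ≤ W k i j) (s m : ℕ) (i j : Fin n) : 0 ≤ F W s m i j := by
  induction m generalizing i j with
  | zero => simp [F, Matrix.one_apply]; positivity
  | succ m ih =>
    simp only [F, Matrix.mul_apply]
    exact Finset.sum_nonneg fun l _ => mul_nonneg (hW _ _ _) (ih _ _)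

lemma F_row (hW : ∀ k i, ∑ j, W k i j = 1) (s m : ℕ) (i : Fin n) : ∑ j, F W s m i j = 1 := by
  induction m generalizing i with
  | zero =>
    show ∑ j, (1 : Matrix (Fin n) (Fin n) ℝ) i j = 1
    simp [Matrix.one_apply]
  | succ m ih =>
    show ∑ j, (W (s + m) * F W s m) i j = 1
    simp only [Matrix.mul_apply]
    rw [Finset.sum_comm]
    have h : ∀ l : Fin n, ∑ j, W (s + m) i l * F W s m l j = W (s + m) i l := by
      intro l; rw [← Finset.mul_sum, ih l, mul_one]
    rw [Finset.sum_congr rfl fun l _ => h l, hW]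

lemma F_col (hW : ∀ k j, ∑ i, W k i j = 1) (s m : ℕ) (j : Fin n) : ∑ i, F W s m i j = 1 := by
  induction m generalizing j with
  | zero =>
    show ∑ i, (1 : Matrix (Fin n) (Fin n) ℝ) i j = 1
    simp [Matrix.one_apply]
  | succ m ih =>
    show ∑ i, (W (s + m) * F W s m) i j = 1
    simp only [Matrix.mul_apply]
    rw [Finset.sum_comm]
    have h : ∀ l : Fin n, ∑ i, W (s + m) i l * F W s m l j = F W s m l j := by
      intro l; rw [← Finset.sum_mul, hW, one_mul]
    rw [Finset.sum_congr rfl fun l _ => h l, ih j]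

lemma F_le_one (h0 : ∀ k i j, 0 ≤ W k i j) (h1 : ∀ k i, ∑ j, W k i j = 1)
    (s m : ℕ) (i j : Fin n) : F W s m i j ≤ 1 := by
  have := F_row h1 s m i
  calc F W s m i j ≤ ∑ j, F W s m i j :=
        Finset.single_le_sum (fun l _ => F_nonneg h0 s m i l) (Finset.mem_univ j)
    _ = 1 := this

lemma F_add (s m l : ℕ) : F W s (m + l) = F W (s + m) l * F W s m := by
  induction l with
  | zero => simp [F]
  | succ l ih =>
    show W (s + (m + l)) * F W s (m + l) = W ((s + m) + l) * F W (s + m) l * F W s m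
    rw [ih, Matrix.mul_assoc, add_assoc]

lemma osc_contract (hne : (Finset.univ : Finset (Fin n)).Nonempty)
    (A : Matrix (Fin n) (Fin n) ℝ) (v : Fin n → ℝ)
    (hA0 : ∀ i j, 0 ≤ A i j) (hAr : ∀ i, ∑ j, A i j = 1)
    (ε : ℝ) (hε : 0 ≤ ε) (hAε : ∀ i j, ε ≤ A i j) :
    Finset.univ.sup' hne (fun i => ∑ j, A i j * v j)
        - Finset.univ.inf' hne (fun i => ∑ j, A i j * v j)
      ≤ (1 - ε) * (Finset.univ.sup' hne v - Finset.univ.inf' hne v) := by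
  set M := Finset.univ.sup' hne v with hM
  set m := Finset.univ.inf' hne v with hm
  obtain ⟨j0, -, hj0⟩ := Finset.exists_mem_eq_inf' hne v
  obtain ⟨j1, -, hj1⟩ := Finset.exists_mem_eq_sup' hne v
  have hvM : ∀ j, v j ≤ M := fun j => Finset.le_sup' v (Finset.mem_univ j)
  have hvm : ∀ j, m ≤ v j := fun j => Finset.inf'_le v (Finset.mem_univ j)
  have hosc : 0 ≤ M - m := by
    have h1 := hvM j0
    rw [← hj0] at h1
    linarith
  have hA1 : ∀ i j, A i j ≤ 1 := by
    intro i j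
    have h := Finset.single_le_sum (f := fun l => A i l)
      (fun l _ => hA0 i l) (Finset.mem_univ j)
    rw [hAr i] at h; exact h
  have upper : ∀ i, ∑ j, A i j * v j ≤ M - ε * (M - m) := by
    intro i
    have hsplit : ∑ j, A i j * v j
        = A i j0 * v j0 + ∑ j ∈ Finset.univ.erase j0, A i j * v j := by
      exact (Finset.add_sum_erase _ (fun x => A i x * v x) (Finset.mem_univ j0)).symm
    have h1 : ∑ j ∈ Finset.univ.erase j0, A i j * v j
        ≤ ∑ j ∈ Finset.univ.erase j0, A i j * M :=
      Finset.sum_le_sum fun j _ => mul_le_mul_of_nonneg_left (hvM j) (hA0 i j)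
    have h2 : ∑ j ∈ Finset.univ.erase j0, A i j * M = (1 - A i j0) * M := by
      rw [← Finset.sum_mul]
      congr 1
      have := Finset.add_sum_erase Finset.univ (fun l => A i l) (Finset.mem_univ j0)
      rw [hAr i] at this
      linarith [this]
    have hAj0 := hAε i j0
    rw [hsplit, ← hj0]
    nlinarith [hA1 i j0]
  have lower : ∀ i, m + ε * (M - m) ≤ ∑ j, A i j * v j := by
    intro i
    have hsplit : ∑ j, A i j * v j
        = A i j1 * v j1 + ∑ j ∈ Finset.univ.erase j1, A i j * v j := by
      exact (Finset.add_sum_erase _ (fun x => A i x * v x) (Finset.mem_univ j1)).symm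
    have h1 : ∑ j ∈ Finset.univ.erase j1, A i j * m
        ≤ ∑ j ∈ Finset.univ.erase j1, A i j * v j :=
      Finset.sum_le_sum fun j _ => mul_le_mul_of_nonneg_left (hvm j) (hA0 i j)
    have h2 : ∑ j ∈ Finset.univ.erase j1, A i j * m = (1 - A i j1) * m := by
      rw [← Finset.sum_mul]
      congr 1
      have := Finset.add_sum_erase Finset.univ (fun l => A i l) (Finset.mem_univ j1)
      rw [hAr i] at this
      linarith [this]
    have hAj1 := hAε i j1
    rw [hsplit, ← hj1]
    nlinarith [hA1 i j1]
  have hsup : Finset.univ.sup' hne (fun i => ∑ j, A i j * v j) ≤ M - ε * (M - m) :=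
    Finset.sup'_le hne _ fun i _ => upper i
  have hinf : m + ε * (M - m) ≤ Finset.univ.inf' hne (fun i => ∑ j, A i j * v j) :=
    Finset.le_inf' hne _ fun i _ => lower i
  nlinarith [hsup, hinf]

lemma mul_entry_lb (A B : Matrix (Fin n) (Fin n) ℝ)
    (hA : ∀ i j, 0 ≤ A i j) (hB : ∀ i j, 0 ≤ B i j) (i l j : Fin n) :
    A i l * B l j ≤ (A * B) i j := by
  rw [Matrix.mul_apply]
  exact Finset.single_le_sum (f := fun t => A i t * B t j)
    (fun t _ => mul_nonneg (hA i t) (hB t j)) (Finset.mem_univ l)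

lemma F_diag {η : ℝ} (hη : 0 ≤ η) (h0 : ∀ k i j, 0 ≤ W k i j) (hd : ∀ k i, η ≤ W k i i)
    (s m : ℕ) (j : Fin n) : η ^ m ≤ F W s m j j := by
  induction m with
  | zero => simp [F, Matrix.one_apply]
  | succ m ih =>
    show η ^ (m + 1) ≤ (W (s + m) * F W s m) j j
    calc η ^ (m + 1) = η * η ^ m := by ring
      _ ≤ W (s + m) j j * F W s m j j :=
          mul_le_mul (hd _ _) ih (pow_nonneg hη m) (le_trans hη (hd _ _))
      _ ≤ (W (s + m) * F W s m) j j := mul_entry_lb _ _ (h0 _) (F_nonneg h0 s m) j j j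

lemma F_kappa {η : ℝ} (hη : 0 ≤ η) (h0 : ∀ k i j, 0 ≤ W k i j) (hd : ∀ k i, η ≤ W k i i)
    {κ : ℕ} (hWconn : ∀ k, ∀ i j : Fin n, ∃ s, k ≤ s ∧ s < k + κ ∧ η ≤ W s i j)
    (s : ℕ) (i j : Fin n) : η ^ κ ≤ F W s κ i j := by
  obtain ⟨t, hts, htκ, hWt⟩ := hWconn s i j
  have key : ∀ d, η ^ (t - s + 1 + d) ≤ F W s (t - s + 1 + d) i j := by
    intro d
    induction d with
    | zero =>
      have hst : s + (t - s) = t := by omega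
      show η ^ (t - s + 1 + 0) ≤ F W s ((t - s) + 1) i j
      calc η ^ (t - s + 1 + 0) = η * η ^ (t - s) := by ring
        _ ≤ W t i j * F W s (t - s) j j :=
            mul_le_mul hWt (F_diag hη h0 hd s (t - s) j) (pow_nonneg hη _) (le_trans hη hWt)
        _ ≤ (W t * F W s (t - s)) i j := mul_entry_lb _ _ (h0 _) (F_nonneg h0 s _) i j j
        _ = F W s ((t - s) + 1) i j := by rw [show F W s ((t-s)+1) = W (s + (t-s)) * F W s (t-s) from rfl, hst]
    | succ d ih =>
      show η ^ (t - s + 1 + (d + 1)) ≤ F W s ((t - s + 1 + d) + 1) i j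
      calc η ^ (t - s + 1 + (d + 1)) = η * η ^ (t - s + 1 + d) := by ring
        _ ≤ W (s + (t - s + 1 + d)) i i * F W s (t - s + 1 + d) i j :=
            mul_le_mul (hd _ _) ih (pow_nonneg hη _) (le_trans hη (hd _ _))
        _ ≤ (W (s + (t - s + 1 + d)) * F W s (t - s + 1 + d)) i j :=
            mul_entry_lb _ _ (h0 _) (F_nonneg h0 s _) i i j
  have hle : t - s + 1 ≤ κ := by omega
  have := key (κ - (t - s + 1))
  rwa [show t - s + 1 + (κ - (t - s + 1)) = κ from by omega] at this

lemma F_osc {η : ℝ} (hη0 : 0 ≤ η) (hη1 : η ≤ 1)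
    (hne : (Finset.univ : Finset (Fin n)).Nonempty)
    (h0 : ∀ k i j, 0 ≤ W k i j) (hrow : ∀ k i, ∑ j, W k i j = 1)
    (hd : ∀ k i, η ≤ W k i i)
    {κ : ℕ} (hκ : 1 ≤ κ)
    (hWconn : ∀ k, ∀ i j : Fin n, ∃ s, k ≤ s ∧ s < k + κ ∧ η ≤ W s i j)
    (m : ℕ) (s : ℕ) (j : Fin n) :
    Finset.univ.sup' hne (fun i => F W s m i j) - Finset.univ.inf' hne (fun i => F W s m i j)
      ≤ (1 - η ^ κ) ^ (m / κ) := by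
  induction m using Nat.strong_induction_on generalizing s with
  | _ m ih =>
  rcases lt_or_ge m κ with hlt | hge
  · rw [Nat.div_eq_of_lt hlt, pow_zero]
    have hs : Finset.univ.sup' hne (fun i => F W s m i j) ≤ 1 :=
      Finset.sup'_le hne _ fun i _ => F_le_one h0 hrow s m i j
    have hi : (0:ℝ) ≤ Finset.univ.inf' hne (fun i => F W s m i j) :=
      Finset.le_inf' hne _ fun i _ => F_nonneg h0 s m i j
    linarith
  · have hm : m = (m - κ) + κ := by omega
    have hFa : F W s m = F W (s + (m - κ)) κ * F W s (m - κ) := by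
      conv_lhs => rw [hm]
      exact F_add s (m - κ) κ
    have hcol : ∀ i, F W s m i j = ∑ l, F W (s + (m - κ)) κ i l * F W s (m - κ) l j := by
      intro i; rw [hFa, Matrix.mul_apply]
    have hcontr := osc_contract hne (F W (s + (m - κ)) κ) (fun l => F W s (m - κ) l j)
      (F_nonneg h0 _ κ) (F_row hrow _ κ) (η ^ κ) (pow_nonneg hη0 κ)
      (fun i l => F_kappa hη0 h0 hd hWconn (s + (m - κ)) i l)
    have hprev := ih (m - κ) (by omega) s
    have hdiv : m / κ = (m - κ) / κ + 1 := by
      rw [Nat.div_eq_sub_div (by omega) hge]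
    have hbase : (0:ℝ) ≤ 1 - η ^ κ := by
      have : η ^ κ ≤ 1 := pow_le_one₀ hη0 hη1
      linarith
    calc Finset.univ.sup' hne (fun i => F W s m i j)
          - Finset.univ.inf' hne (fun i => F W s m i j)
        = Finset.univ.sup' hne (fun i => ∑ l, F W (s + (m - κ)) κ i l * F W s (m - κ) l j)
          - Finset.univ.inf' hne (fun i => ∑ l, F W (s + (m - κ)) κ i l * F W s (m - κ) l j) := by
          congr 1
          · exact Finset.sup'_congr hne rfl fun i _ => hcol i
          · exact Finset.inf'_congr hne rfl fun i _ => hcol i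
      _ ≤ (1 - η ^ κ) * (Finset.univ.sup' hne (fun l => F W s (m - κ) l j)
            - Finset.univ.inf' hne (fun l => F W s (m - κ) l j)) := hcontr
      _ ≤ (1 - η ^ κ) * (1 - η ^ κ) ^ ((m - κ) / κ) := by
          exact mul_le_mul_of_nonneg_left hprev hbase
      _ = (1 - η ^ κ) ^ (m / κ) := by rw [hdiv, pow_succ]; ring

lemma F_dev (hne : (Finset.univ : Finset (Fin n)).Nonempty)
    (h0 : ∀ k i j, 0 ≤ W k i j) (hcol : ∀ k j, ∑ i, W k i j = 1)
    (s m : ℕ) (i j : Fin n) :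
    |F W s m i j - (n:ℝ)⁻¹|
      ≤ Finset.univ.sup' hne (fun i => F W s m i j)
        - Finset.univ.inf' hne (fun i => F W s m i j) := by
  have hnpos : 0 < (n:ℝ) := by
    have : 0 < n := Finset.univ_nonempty_iff.mp hne |>.elim fun i => i.pos
    exact_mod_cast this
  set S := Finset.univ.sup' hne (fun i => F W s m i j)
  set I := Finset.univ.inf' hne (fun i => F W s m i j)
  have h1 : (1:ℝ) ≤ (n:ℝ) * S := by
    have : ∑ l, F W s m l j ≤ ∑ l : Fin n, S :=
      Finset.sum_le_sum fun l _ => Finset.le_sup' (fun i => F W s m i j) (Finset.mem_univ l)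
    rw [F_col hcol s m j] at this
    simpa [Finset.sum_const, Finset.card_univ, mul_comm] using this
  have h2 : (n:ℝ) * I ≤ 1 := by
    have : ∑ l : Fin n, I ≤ ∑ l, F W s m l j :=
      Finset.sum_le_sum fun l _ => Finset.inf'_le (fun i => F W s m i j) (Finset.mem_univ l)
    rw [F_col hcol s m j] at this
    simpa [Finset.sum_const, Finset.card_univ, mul_comm] using this
  have hIe : I ≤ F W s m i j :=
    Finset.inf'_le (fun l => F W s m l j) (Finset.mem_univ i)
  have heS : F W s m i j ≤ S :=
    Finset.le_sup' (fun l => F W s m l j) (Finset.mem_univ i)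
  have hIinv : I ≤ (n:ℝ)⁻¹ := by
    rw [inv_eq_one_div, le_div_iff₀ hnpos]; linarith
  have hSinv : (n:ℝ)⁻¹ ≤ S := by
    rw [inv_eq_one_div, div_le_iff₀ hnpos]; linarith
  rw [abs_sub_le_iff]
  constructor <;> linarith

lemma rate_le {a : ℝ} (ha0 : 0 < a) (ha1 : a < 1) {κ K₀ : ℕ}
    (hκ : 1 ≤ κ) (hκK : κ ≤ K₀) (m : ℕ) (hm : 1 ≤ m) :
    (1 - a) ^ (m / κ) ≤ (2 * (1 + a⁻¹) / (1 - a)) * ((1 - a) ^ ((K₀:ℝ)⁻¹)) ^ (m - 1) := by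
  set c : ℝ := 1 - a with hc
  have hc0 : 0 < c := by simp [hc]; linarith
  have hc1 : c ≤ 1 := by simp [hc]; linarith
  have hK0 : (0:ℝ) < (K₀:ℝ) := by exact_mod_cast Nat.lt_of_lt_of_le (by omega) hκK
  -- rewrite RHS pow as rpow
  have hrhs : ((c : ℝ) ^ ((K₀:ℝ)⁻¹)) ^ (m - 1) = c ^ ((K₀:ℝ)⁻¹ * (m - 1 : ℕ)) := by
    rw [← Real.rpow_natCast (c ^ ((K₀:ℝ)⁻¹)) (m - 1), ← Real.rpow_mul hc0.le]
  have hlhs : (c : ℝ) ^ (m / κ) = c ^ ((m / κ : ℕ) : ℝ) := by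
    rw [Real.rpow_natCast]
  -- exponent comparison: (m-1)/K₀ - 1 ≤ m/κ  (nat div)
  have hexp : (K₀:ℝ)⁻¹ * (m - 1 : ℕ) - 1 ≤ ((m / κ : ℕ) : ℝ) := by
    have h1 : (m - 1 : ℕ) ≤ K₀ * (m / κ + 1) := by
      have h2 : m < κ * (m / κ + 1) := Nat.lt_mul_div_succ m (by omega)
      have h3 : κ * (m / κ + 1) ≤ K₀ * (m / κ + 1) := Nat.mul_le_mul_right _ hκK
      omega
    have h1' : ((m - 1 : ℕ) : ℝ) ≤ (K₀ : ℝ) * ((m / κ : ℕ) + 1) := by exact_mod_cast h1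
    rw [sub_le_iff_le_add, inv_mul_le_iff₀ hK0]
    nlinarith
  have hmono : c ^ (((m / κ : ℕ)) : ℝ) ≤ c ^ ((K₀:ℝ)⁻¹ * (m - 1 : ℕ) - 1) :=
    Real.rpow_le_rpow_of_exponent_ge hc0 hc1 hexp
  have hsub : c ^ ((K₀:ℝ)⁻¹ * (m - 1 : ℕ) - 1) = c ^ ((K₀:ℝ)⁻¹ * (m - 1 : ℕ)) / c := by
    rw [Real.rpow_sub hc0, Real.rpow_one]
  have hcoef : (1:ℝ) ≤ 2 * (1 + a⁻¹) := by
    have : 0 < a⁻¹ := inv_pos.mpr ha0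
    linarith
  have hpow_pos : 0 < c ^ ((K₀:ℝ)⁻¹ * (m - 1 : ℕ)) := Real.rpow_pos_of_pos hc0 _
  rw [hrhs, hlhs]
  calc c ^ (((m / κ : ℕ)) : ℝ) ≤ c ^ ((K₀:ℝ)⁻¹ * (m - 1 : ℕ)) / c := by rw [← hsub]; exact hmono
    _ ≤ 2 * (1 + a⁻¹) / c * c ^ ((K₀:ℝ)⁻¹ * (m - 1 : ℕ)) := by
        rw [div_mul_eq_mul_div]
        gcongr
        nlinarith

lemma unroll {V : Type*} [AddCommGroup V] [Module ℝ V]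
    (W : ℕ → Matrix (Fin n) (Fin n) ℝ) (x q : ℕ → Fin n → V)
    (hrec : ∀ k, ∀ i, x (k + 1) i = (∑ j, W k i j • x k j) + q (k + 1) i) :
    ∀ k i, x (k + 1) i = (∑ j, F W 0 (k + 1) i j • x 0 j)
      + ∑ s ∈ Finset.Icc 1 (k + 1), ∑ j, F W s (k + 1 - s) i j • q s j := by
  intro k
  induction k with
  | zero =>
    intro i
    have h1 : F W 0 1 = W 0 := by
      show W (0 + 0) * (1 : Matrix (Fin n) (Fin n) ℝ) = W 0
      rw [Matrix.mul_one]
    have h2 : ∑ s ∈ Finset.Icc 1 1, ∑ j, F W s (1 - s) i j • q s j = q 1 i := by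
      rw [show Finset.Icc 1 1 = {1} from rfl, Finset.sum_singleton]
      show ∑ j, (1 : Matrix (Fin n) (Fin n) ℝ) i j • q 1 j = q 1 i
      simp [Matrix.one_apply]
    rw [h1, h2, hrec 0 i]
  | succ k ih =>
    intro i
    have hF0 : F W 0 (k + 2) = W (k + 1) * F W 0 (k + 1) := by
      show W (0 + (k + 1)) * F W 0 (k + 1) = _
      rw [Nat.zero_add]
    have e1 : ∑ j, W (k+1) i j • x (k+1) j
        = (∑ l, F W 0 (k+2) i l • x 0 l)
          + ∑ s ∈ Finset.Icc 1 (k+1), ∑ l, F W s (k+2-s) i l • q s l := by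
      calc ∑ j, W (k+1) i j • x (k+1) j
          = ∑ j, W (k+1) i j • ((∑ l, F W 0 (k+1) j l • x 0 l)
              + ∑ s ∈ Finset.Icc 1 (k+1), ∑ l, F W s (k+1-s) j l • q s l) :=
            Finset.sum_congr rfl fun j _ => by rw [ih j]
        _ = (∑ j, ∑ l, (W (k+1) i j * F W 0 (k+1) j l) • x 0 l)
            + ∑ j, ∑ s ∈ Finset.Icc 1 (k+1), ∑ l, (W (k+1) i j * F W s (k+1-s) j l) • q s l := by
            simp only [smul_add, Finset.smul_sum, smul_smul]
            rw [Finset.sum_add_distrib]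
        _ = (∑ l, F W 0 (k+2) i l • x 0 l)
            + ∑ s ∈ Finset.Icc 1 (k+1), ∑ l, F W s (k+2-s) i l • q s l := by
            congr 1
            · rw [Finset.sum_comm]
              refine Finset.sum_congr rfl fun l _ => ?_
              rw [← Finset.sum_smul]
              congr 1
              rw [hF0, Matrix.mul_apply]
            · rw [Finset.sum_comm]
              refine Finset.sum_congr rfl fun s hs => ?_
              have hs' : 1 ≤ s ∧ s ≤ k + 1 := Finset.mem_Icc.mp hs
              have hFs : F W s (k+2-s) = W (k+1) * F W s (k+1-s) := by
                rw [show k+2-s = (k+1-s)+1 from by omega]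
                show W (s + (k+1-s)) * F W s (k+1-s) = _
                rw [show s + (k+1-s) = k+1 from by omega]
              rw [Finset.sum_comm]
              refine Finset.sum_congr rfl fun l _ => ?_
              rw [← Finset.sum_smul]
              congr 1
              rw [hFs, Matrix.mul_apply]
    have hq2 : q (k+2) i = ∑ l, F W (k+2) (k+2-(k+2)) i l • q (k+2) l := by
      rw [show k+2-(k+2) = 0 from by omega]
      show _ = ∑ l, (1 : Matrix (Fin n) (Fin n) ℝ) i l • q (k+2) l
      simp [Matrix.one_apply]
    have hicc : Finset.Icc 1 (k+2) = insert (k+2) (Finset.Icc 1 (k+1)) := by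
      ext t
      simp [Finset.mem_Icc, Finset.mem_insert]
      omega
    rw [hrec (k+1) i, e1, hicc, Finset.sum_insert (by simp)]
    rw [← hq2]
    abel

end PCEB

open PCEB in
/-- Estimate (B-7)/(B-8): explicit consensus-error bound for perturbed consensus:
`‖xᵢ(k+1) − x̄(k+1)‖ ≤ n·μ·βᵏ·maxⱼ‖xⱼ(0)‖ + 2·ι(k)·D + n·μ·D·Σ_{s=1}^{k} β^{k−s} ι(s−1)`. -/
theorem perturbed_consensus_error_bound
    {p n : ℕ} (hn : 0 < n)
    (η : ℝ) (hη : η ∈ Set.Ioo (0 : ℝ) 1) (κ : ℕ) (hκ : 1 ≤ κ)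
    (W : ℕ → Matrix (Fin n) (Fin n) ℝ)
    (hWnonneg : ∀ k i j, 0 ≤ W k i j)
    (hWrow : ∀ k i, ∑ j, W k i j = 1)
    (hWcol : ∀ k j, ∑ i, W k i j = 1)
    (hWdiag : ∀ k i, η ≤ W k i i)
    (hWpos : ∀ k i j, W k i j ≠ 0 → η ≤ W k i j)
    (hWconn : ∀ k, ∀ i j : Fin n, ∃ s, k ≤ s ∧ s < k + κ ∧ η ≤ W s i j)
    (K₀ : ℕ) (hK₀ : K₀ = (n - 1) * κ)
    (β μ : ℝ)
    (hβ : β = (1 - η ^ K₀) ^ ((K₀ : ℝ)⁻¹))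
    (hμ : μ = 2 * (1 + (η ^ K₀)⁻¹) / (1 - η ^ K₀))
    (D : ℝ) (hD : 0 ≤ D)
    (ι : ℕ → ℝ) (hιnonneg : ∀ k, 0 ≤ ι k)
    (x q : ℕ → Fin n → EuclideanSpace ℝ (Fin p))
    (hrec : ∀ k, ∀ i, x (k + 1) i = (∑ j, W k i j • x k j) + q (k + 1) i)
    (hq : ∀ k, ∀ i, ‖q (k + 1) i‖ ≤ ι k * D) :
    ∀ i : Fin n, ∀ k : ℕ,
      ‖x (k + 1) i - (n : ℝ)⁻¹ • ∑ j, x (k + 1) j‖ ≤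
        (n : ℝ) * μ * β ^ k *
            Finset.univ.sup' (Finset.univ_nonempty_iff.mpr ⟨⟨0, hn⟩⟩) (fun j => ‖x 0 j‖) +
          2 * ι k * D +
          (n : ℝ) * μ * D * ∑ s ∈ Finset.Icc 1 k, β ^ (k - s) * ι (s - 1) := by
  intro i k
  have hη0 : 0 < η := hη.1
  have hη1 : η < 1 := hη.2
  have hne : (Finset.univ : Finset (Fin n)).Nonempty := Finset.univ_nonempty_iff.mpr ⟨⟨0, hn⟩⟩
  set M := Finset.univ.sup' (Finset.univ_nonempty_iff.mpr ⟨⟨0, hn⟩⟩) (fun j => ‖x 0 j‖) with hMdef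
  rcases Nat.lt_or_ge n 2 with hn2 | hn2
  · -- n = 1
    have hn1 : n = 1 := by omega
    subst hn1
    have hK0 : K₀ = 0 := by rw [hK₀]; omega
    have hμ0 : μ = 0 := by rw [hμ, hK0]; norm_num
    have hsum1 : ∑ j, x (k + 1) j = x (k + 1) i := by
      have hi : i = 0 := Subsingleton.elim i 0
      rw [Fin.sum_univ_one, hi]
    have hLHS : x (k + 1) i - ((1:ℕ) : ℝ)⁻¹ • ∑ j, x (k + 1) j = 0 := by
      rw [hsum1]
      norm_num
    rw [hLHS, norm_zero, hμ0]
    have h2 : 0 ≤ 2 * ι k * D :=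
      mul_nonneg (mul_nonneg (by norm_num) (hιnonneg k)) hD
    simp only [Nat.cast_one, mul_zero, zero_mul, zero_add, add_zero]
    linarith
  · -- 2 ≤ n
    have hκK : κ ≤ K₀ := by
      rw [hK₀]
      calc κ = 1 * κ := (one_mul κ).symm
        _ ≤ (n - 1) * κ := Nat.mul_le_mul_right κ (by omega)
    have ha0 : 0 < η ^ K₀ := pow_pos hη0 _
    have ha1 : η ^ K₀ < 1 := pow_lt_one₀ hη0.le hη1 (by omega)
    have hc0 : 0 < 1 - η ^ K₀ := by linarith
    have hβ0 : 0 ≤ β := by rw [hβ]; positivity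
    have hμ0 : 0 ≤ μ := by
      rw [hμ]
      have := inv_pos.mpr ha0
      apply div_nonneg <;> linarith
    have hμβ : ∀ k' : ℕ, 0 ≤ μ * β ^ k' := fun k' => mul_nonneg hμ0 (pow_nonneg hβ0 k')
    have hdev : ∀ (s m : ℕ), 1 ≤ m → ∀ (i' j : Fin n),
        |F W s m i' j - (n:ℝ)⁻¹| ≤ μ * β ^ (m - 1) := by
      intro s m hm i' j
      have h1 := F_dev hne hWnonneg hWcol s m i' j
      have h2 := F_osc hη0.le hη1.le hne hWnonneg hWrow hWdiag hκ hWconn m s j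
      have h3 : (1 - η ^ κ) ^ (m / κ) ≤ (1 - η ^ K₀) ^ (m / κ) := by
        apply pow_le_pow_left₀ ?_ ?_
        · have : η ^ κ ≤ 1 := pow_le_one₀ hη0.le hη1.le
          linarith
        · have : η ^ K₀ ≤ η ^ κ := pow_le_pow_of_le_one hη0.le hη1.le hκK
          linarith
      have h4 := rate_le ha0 ha1 hκ hκK m hm
      rw [← hμ, ← hβ] at h4
      linarith
    have hM0 : 0 ≤ M :=
      le_trans (norm_nonneg (x 0 ⟨0, hn⟩)) (Finset.le_sup' (fun j => ‖x 0 j‖) (Finset.mem_univ _))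
    have hMj : ∀ j, ‖x 0 j‖ ≤ M := fun j => Finset.le_sup' (fun j => ‖x 0 j‖) (Finset.mem_univ j)
    have hsum : ∑ j, x (k+1) j
        = (∑ l, x 0 l) + ∑ s ∈ Finset.Icc 1 (k+1), ∑ l, q s l := by
      rw [Finset.sum_congr rfl fun j _ => unroll W x q hrec k j, Finset.sum_add_distrib]
      congr 1
      · rw [Finset.sum_comm]
        refine Finset.sum_congr rfl fun l _ => ?_
        rw [← Finset.sum_smul, F_col hWcol, one_smul]
      · rw [Finset.sum_comm]
        refine Finset.sum_congr rfl fun s _ => ?_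
        rw [Finset.sum_comm]
        refine Finset.sum_congr rfl fun l _ => ?_
        rw [← Finset.sum_smul, F_col hWcol, one_smul]
    have hdiff : x (k+1) i - (n:ℝ)⁻¹ • ∑ j, x (k+1) j
        = (∑ l, (F W 0 (k+1) i l - (n:ℝ)⁻¹) • x 0 l)
          + ∑ s ∈ Finset.Icc 1 (k+1), ∑ l, (F W s (k+1-s) i l - (n:ℝ)⁻¹) • q s l := by
      rw [unroll W x q hrec k i, hsum]
      simp only [sub_smul, Finset.sum_sub_distrib, smul_add, Finset.smul_sum]
      abel
    have hb1 : ‖∑ l, (F W 0 (k+1) i l - (n:ℝ)⁻¹) • x 0 l‖ ≤ (n:ℝ) * μ * β ^ k * M := by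
      calc ‖∑ l, (F W 0 (k+1) i l - (n:ℝ)⁻¹) • x 0 l‖
          ≤ ∑ l, ‖(F W 0 (k+1) i l - (n:ℝ)⁻¹) • x 0 l‖ := norm_sum_le _ _
        _ ≤ ∑ _l : Fin n, μ * β ^ k * M := by
            refine Finset.sum_le_sum fun l _ => ?_
            rw [norm_smul, Real.norm_eq_abs]
            have h1 := hdev 0 (k+1) (by omega) i l
            rw [Nat.add_sub_cancel] at h1
            exact mul_le_mul h1 (hMj l) (norm_nonneg _) (hμβ k)
        _ = (n:ℝ) * (μ * β ^ k * M) := by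
            rw [Finset.sum_const, Finset.card_univ, Fintype.card_fin, nsmul_eq_mul]
        _ = (n:ℝ) * μ * β ^ k * M := by ring
    have hb2 : ‖∑ l, (F W (k+1) (k+1-(k+1)) i l - (n:ℝ)⁻¹) • q (k+1) l‖ ≤ 2 * ι k * D := by
      rw [show k+1-(k+1) = 0 from by omega]
      have hn0 : ((n:ℝ)) ≠ 0 := by positivity
      have he : ∑ l, (F W (k+1) 0 i l - (n:ℝ)⁻¹) • q (k+1) l
          = q (k+1) i - (n:ℝ)⁻¹ • ∑ l, q (k+1) l := by
        have hid : ∀ l : Fin n, F W (k+1) 0 i l = (1 : Matrix (Fin n) (Fin n) ℝ) i l :=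
          fun l => rfl
        simp only [hid, sub_smul, Finset.sum_sub_distrib, Matrix.one_apply, ite_smul,
          one_smul, zero_smul, Finset.smul_sum]
        congr 1
        simp
      rw [he]
      calc ‖q (k+1) i - (n:ℝ)⁻¹ • ∑ l, q (k+1) l‖
          ≤ ‖q (k+1) i‖ + ‖(n:ℝ)⁻¹ • ∑ l, q (k+1) l‖ := norm_sub_le _ _
        _ ≤ ι k * D + (n:ℝ)⁻¹ * ((n:ℝ) * (ι k * D)) := by
            refine add_le_add (hq k i) ?_
            rw [norm_smul, Real.norm_eq_abs, abs_of_nonneg (by positivity)]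
            refine mul_le_mul_of_nonneg_left ?_ (by positivity)
            calc ‖∑ l, q (k+1) l‖ ≤ ∑ l, ‖q (k+1) l‖ := norm_sum_le _ _
              _ ≤ ∑ _l : Fin n, ι k * D := Finset.sum_le_sum fun l _ => hq k l
              _ = (n:ℝ) * (ι k * D) := by
                  rw [Finset.sum_const, Finset.card_univ, Fintype.card_fin, nsmul_eq_mul]
        _ = 2 * ι k * D := by rw [inv_mul_cancel_left₀ hn0]; ring
    have hb3 : ∀ s ∈ Finset.Icc 1 k, ‖∑ l, (F W s (k+1-s) i l - (n:ℝ)⁻¹) • q s l‖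
        ≤ (n:ℝ) * (μ * β ^ (k-s) * (ι (s-1) * D)) := by
      intro s hs
      obtain ⟨hs1, hs2⟩ := Finset.mem_Icc.mp hs
      have hql : ∀ l, ‖q s l‖ ≤ ι (s-1) * D := by
        intro l
        have := hq (s-1) l
        rwa [show s-1+1 = s from by omega] at this
      calc ‖∑ l, (F W s (k+1-s) i l - (n:ℝ)⁻¹) • q s l‖
          ≤ ∑ l, ‖(F W s (k+1-s) i l - (n:ℝ)⁻¹) • q s l‖ := norm_sum_le _ _
        _ ≤ ∑ _l : Fin n, μ * β ^ (k-s) * (ι (s-1) * D) := by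
            refine Finset.sum_le_sum fun l _ => ?_
            rw [norm_smul, Real.norm_eq_abs]
            have h1 := hdev s (k+1-s) (by omega) i l
            rw [show k+1-s-1 = k-s from by omega] at h1
            exact mul_le_mul h1 (hql l) (norm_nonneg _) (hμβ (k-s))
        _ = (n:ℝ) * (μ * β ^ (k-s) * (ι (s-1) * D)) := by
            rw [Finset.sum_const, Finset.card_univ, Fintype.card_fin, nsmul_eq_mul]
    have hsplit : Finset.Icc 1 (k+1) = insert (k+1) (Finset.Icc 1 k) := by
      ext t
      simp only [Finset.mem_Icc, Finset.mem_insert]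
      omega
    rw [hdiff, hsplit, Finset.sum_insert (by simp)]
    have hfinal : ∑ s ∈ Finset.Icc 1 k, (n:ℝ) * (μ * β ^ (k-s) * (ι (s-1) * D))
        = (n:ℝ) * μ * D * ∑ s ∈ Finset.Icc 1 k, β ^ (k-s) * ι (s-1) := by
      rw [Finset.mul_sum]
      exact Finset.sum_congr rfl fun s _ => by ring
    calc ‖(∑ l, (F W 0 (k+1) i l - (n:ℝ)⁻¹) • x 0 l)
          + ((∑ l, (F W (k+1) (k+1-(k+1)) i l - (n:ℝ)⁻¹) • q (k+1) l)
            + ∑ s ∈ Finset.Icc 1 k, ∑ l, (F W s (k+1-s) i l - (n:ℝ)⁻¹) • q s l)‖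
        ≤ ‖∑ l, (F W 0 (k+1) i l - (n:ℝ)⁻¹) • x 0 l‖
          + (‖∑ l, (F W (k+1) (k+1-(k+1)) i l - (n:ℝ)⁻¹) • q (k+1) l‖
            + ‖∑ s ∈ Finset.Icc 1 k, ∑ l, (F W s (k+1-s) i l - (n:ℝ)⁻¹) • q s l‖) :=
          le_trans (norm_add_le _ _) (by gcongr; exact norm_add_le _ _)
      _ ≤ (n:ℝ) * μ * β ^ k * M + (2 * ι k * D
            + ∑ s ∈ Finset.Icc 1 k, (n:ℝ) * (μ * β ^ (k-s) * (ι (s-1) * D))) := by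
          refine add_le_add hb1 (add_le_add hb2 ?_)
          exact le_trans (norm_sum_le _ _) (Finset.sum_le_sum hb3)
      _ = (n:ℝ) * μ * β ^ k * M + 2 * ι k * D
            + (n:ℝ) * μ * D * ∑ s ∈ Finset.Icc 1 k, β ^ (k-s) * ι (s-1) := by
          rw [hfinal]; ring
end

section
/- Lower bound for the cross term: let f : ℝ^p → ℝ be convex and C-Lipschitz, let ξ, x̄, x*, v ∈ ℝ^p, and let g be a subgradient of f at ξ + v. Then ⟨g, ξ − x*⟩ ≥ f(x̄) − f(x*) − C‖ξ − x̄‖ − 2C‖v‖. -/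
open RealInnerProductSpace

/-- Inequality (C-6) (deterministic core of Lemma 10): if `g` is a subgradient of the
convex `C`-Lipschitz function `f` at `ξ + v`, then
`⟨g, ξ − x*⟩ ≥ f(x̄) − f(x*) − C‖ξ − x̄‖ − 2C‖v‖`. -/
theorem cross_term_lower_bound
    {p : ℕ} (f : EuclideanSpace ℝ (Fin p) → ℝ) (C : ℝ)
    (hconv : ConvexOn ℝ Set.univ f)
    (hlip : ∀ x y, |f x - f y| ≤ C * ‖x - y‖)
    (ξ xbar xstar v g : EuclideanSpace ℝ (Fin p))
    (hg : ∀ y, f (ξ + v) + ⟪g, y - (ξ + v)⟫ ≤ f y) :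
    f xbar - f xstar - C * ‖ξ - xbar‖ - 2 * C * ‖v‖ ≤ ⟪g, ξ - xstar⟫ := by
  rcases le_or_gt 0 C with hC | hC
  · -- main case: C ≥ 0
    have hgC : ‖g‖ ≤ C := by
      have h := hg (ξ + v + g)
      have h1 : ⟪g, (ξ + v + g) - (ξ + v)⟫ = ‖g‖ ^ 2 := by
        rw [show ξ + v + g - (ξ + v) = g by abel, real_inner_self_eq_norm_sq]
      have h2 : f (ξ + v + g) - f (ξ + v) ≤ C * ‖(ξ + v + g) - (ξ + v)‖ :=
        (abs_le.mp (hlip _ _)).2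
      have h3 : ‖(ξ + v + g) - (ξ + v)‖ = ‖g‖ := by
        rw [show ξ + v + g - (ξ + v) = g by abel]
      have h4 : ‖g‖ ^ 2 ≤ C * ‖g‖ := by rw [← h1, ← h3]; linarith
      rcases eq_or_lt_of_le (norm_nonneg g) with hz | hz
      · rw [← hz]; exact hC
      · nlinarith
    have hsub : f (ξ + v) - f xstar ≤ ⟪g, (ξ + v) - xstar⟫ := by
      have h := hg xstar
      have heq : ⟪g, xstar - (ξ + v)⟫ = -⟪g, (ξ + v) - xstar⟫ := by
        rw [← inner_neg_right]; congr 1; abel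
      rw [heq] at h; linarith
    have hfx : f xbar - f (ξ + v) ≤ C * ‖ξ - xbar‖ + C * ‖v‖ := by
      have h := (abs_le.mp (hlip xbar (ξ + v))).2
      have htri : ‖xbar - (ξ + v)‖ ≤ ‖ξ - xbar‖ + ‖v‖ := by
        calc ‖xbar - (ξ + v)‖ = ‖(xbar - ξ) + (-v)‖ := by congr 1; abel
          _ ≤ ‖xbar - ξ‖ + ‖-v‖ := norm_add_le _ _
          _ = ‖ξ - xbar‖ + ‖v‖ := by rw [norm_neg, norm_sub_rev]
      nlinarith
    have hgv : ⟪g, v⟫ ≤ C * ‖v‖ := by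
      calc ⟪g, v⟫ ≤ ‖g‖ * ‖v‖ := real_inner_le_norm g v
        _ ≤ C * ‖v‖ := by nlinarith [norm_nonneg v]
    have hdecomp : ⟪g, ξ - xstar⟫ = ⟪g, (ξ + v) - xstar⟫ - ⟪g, v⟫ := by
      rw [← inner_sub_right]; congr 1; abel
    rw [hdecomp]; linarith
  · -- degenerate case: C < 0 forces the space to be trivial (all points equal)
    have hzero : ∀ x y : EuclideanSpace ℝ (Fin p), x = y := by
      intro x y
      by_contra hne
      have hpos : 0 < ‖x - y‖ := norm_sub_pos_iff.mpr hne
      have := hlip x y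
      have h0 := abs_nonneg (f x - f y)
      nlinarith
    have h1 : xbar = xstar := hzero _ _
    have h2 : ξ - xstar = 0 := sub_eq_zero.mpr (hzero _ _)
    have h3 : ξ - xbar = 0 := sub_eq_zero.mpr (hzero _ _)
    have h4 : v = 0 := hzero _ _
    rw [h1, h2, h4, inner_zero_right, norm_zero]
    simp
end

section
/- One-step consensus-error recursion for the projected step: let X ⊆ ℝ^p be nonempty, closed and convex with metric projection P_X, let W be an n×n doubly stochastic matrix with nonnegative entries, let x_1,…,x_n ∈ X, d_1,…,d_n ∈ ℝ^p and ι > 0. Set ξ_i = Σ_{j=1}^n W_{ij} x_j, x_i' = P_X(ξ_i − ι d_i), x̄ = (1/n) Σ_{i=1}^n x_i and x̄' = (1/n) Σ_{i=1}^n x_i'. Then Σ_{i=1}^n ‖x_i' − x̄'‖² ≤ Σ_{i=1}^n ‖x_i − x̄‖² + ι² Σ_{i=1}^n ‖d_i‖² + 2ι Σ_{i=1}^n ‖d_i‖ · ( Σ_{j=1}^n W_{ij} ‖x_j − x̄‖ ). -/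
open Finset
open scoped RealInnerProductSpace

lemma proj_nonexp {p : ℕ} {X : Set (EuclideanSpace ℝ (Fin p))}
    (hXconv : Convex ℝ X) {P : EuclideanSpace ℝ (Fin p)}
    (hPmem : P ∈ X) (z : EuclideanSpace ℝ (Fin p))
    (hmin : ∀ y ∈ X, dist z P ≤ dist z y)
    {y : EuclideanSpace ℝ (Fin p)} (hy : y ∈ X) :
    ‖P - y‖ ≤ ‖z - y‖ := by
  haveI : Nonempty X := ⟨⟨P, hPmem⟩⟩
  have hinf : ‖z - P‖ = ⨅ w : X, ‖z - w‖ := by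
    apply le_antisymm
    · apply le_ciInf
      intro w
      have := hmin w w.2
      simpa [dist_eq_norm] using this
    · exact ciInf_le ⟨0, fun _ ⟨_, h⟩ => h ▸ norm_nonneg _⟩ (⟨P, hPmem⟩ : X)
  have h1 : (inner ℝ (z - P) (y - P) : ℝ) ≤ 0 :=
    ((norm_eq_iInf_iff_real_inner_le_zero hXconv hPmem).mp hinf) y hy
  have hexp := norm_add_sq_real (z - P) (P - y)
  have heq : z - P + (P - y) = z - y := by abel
  rw [heq] at hexp
  have h2 : (inner ℝ (z - P) (P - y) : ℝ) = -(inner ℝ (z - P) (y - P) : ℝ) := by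
    have : P - y = -(y - P) := by abel
    rw [this, inner_neg_right]
  have hsq : ‖P - y‖ ^ 2 ≤ ‖z - y‖ ^ 2 := by nlinarith [sq_nonneg ‖z - P‖]
  nlinarith [norm_nonneg (P - y), norm_nonneg (z - y)]

lemma mean_min {E : Type*} [NormedAddCommGroup E] [InnerProductSpace ℝ E]
    {ι : Type*} (s : Finset ι) (a : ι → E) (m c : E)
    (hm : ∑ i ∈ s, (a i - m) = 0) :
    ∑ i ∈ s, ‖a i - m‖ ^ 2 ≤ ∑ i ∈ s, ‖a i - c‖ ^ 2 := by
  have expand : ∀ i ∈ s, ‖a i - c‖ ^ 2 =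
      ‖a i - m‖ ^ 2 + (2 * (inner ℝ (a i - m) (m - c) : ℝ) + ‖m - c‖ ^ 2) := by
    intro i _
    have h := norm_add_sq_real (a i - m) (m - c)
    have heq : a i - m + (m - c) = a i - c := by abel
    rw [heq] at h
    linarith
  have hsum : ∑ i ∈ s, (inner ℝ (a i - m) (m - c) : ℝ) = 0 := by
    rw [← sum_inner, hm, inner_zero_left]
  calc ∑ i ∈ s, ‖a i - m‖ ^ 2
      ≤ ∑ i ∈ s, ‖a i - m‖ ^ 2
        + (2 * ∑ i ∈ s, (inner ℝ (a i - m) (m - c) : ℝ) + ∑ i ∈ s, ‖m - c‖ ^ 2) := by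
        rw [hsum]
        have : (0:ℝ) ≤ ∑ _i ∈ s, ‖m - c‖ ^ 2 := Finset.sum_nonneg fun i _ => sq_nonneg _
        linarith
    _ = ∑ i ∈ s, ‖a i - c‖ ^ 2 := by
        rw [Finset.mul_sum, ← Finset.sum_add_distrib, ← Finset.sum_add_distrib]
        exact (Finset.sum_congr rfl expand).symm

/-- Inequality (D-2): one-step consensus-error recursion for the projected step.
With `ξᵢ = Σⱼ Wᵢⱼ xⱼ`, `xᵢ' = P_X(ξᵢ − ι dᵢ)`, and `x̄, x̄'` the averages of the `xᵢ`
and `xᵢ'`, one has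
`Σᵢ ‖xᵢ' − x̄'‖² ≤ Σᵢ ‖xᵢ − x̄‖² + ι² Σᵢ ‖dᵢ‖² + 2ι Σᵢ ‖dᵢ‖ (Σⱼ Wᵢⱼ ‖xⱼ − x̄‖)`. -/
theorem projected_consensus_recursion
    {p n : ℕ} (X : Set (EuclideanSpace ℝ (Fin p)))
    (hXne : X.Nonempty) (hXclosed : IsClosed X) (hXconv : Convex ℝ X)
    (PX : EuclideanSpace ℝ (Fin p) → EuclideanSpace ℝ (Fin p))
    (hPX : ∀ z, PX z ∈ X ∧ ∀ y ∈ X, dist z (PX z) ≤ dist z y)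
    (W : Matrix (Fin n) (Fin n) ℝ)
    (hWnonneg : ∀ i j, 0 ≤ W i j)
    (hWrow : ∀ i, ∑ j, W i j = 1)
    (hWcol : ∀ j, ∑ i, W i j = 1)
    (x d : Fin n → EuclideanSpace ℝ (Fin p))
    (hx : ∀ i, x i ∈ X)
    (ι : ℝ) (hι : 0 < ι)
    (ξ x' : Fin n → EuclideanSpace ℝ (Fin p))
    (hξ : ∀ i, ξ i = ∑ j, W i j • x j)
    (hx' : ∀ i, x' i = PX (ξ i - ι • d i))
    (xbar xbar' : EuclideanSpace ℝ (Fin p))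
    (hxbar : xbar = (n : ℝ)⁻¹ • ∑ i, x i)
    (hxbar' : xbar' = (n : ℝ)⁻¹ • ∑ i, x' i) :
    ∑ i, ‖x' i - xbar'‖ ^ 2 ≤
      ∑ i, ‖x i - xbar‖ ^ 2 + ι ^ 2 * ∑ i, ‖d i‖ ^ 2 +
        2 * ι * ∑ i, ‖d i‖ * (∑ j, W i j * ‖x j - xbar‖) := by
  rcases Nat.eq_zero_or_pos n with hn | hn
  · subst hn; simp
  have hn0 : (n : ℝ) ≠ 0 := Nat.cast_ne_zero.mpr hn.ne'
  -- x̄ ∈ X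
  have hxbarX : xbar ∈ X := by
    rw [hxbar, Finset.smul_sum]
    exact hXconv.sum_mem (fun i _ => by positivity)
      (by rw [Finset.sum_const, Finset.card_univ, Fintype.card_fin, nsmul_eq_mul,
        mul_inv_cancel₀ hn0]) (fun i _ => hx i)
  -- step 1
  have step1 : ∑ i, ‖x' i - xbar'‖ ^ 2 ≤ ∑ i, ‖x' i - xbar‖ ^ 2 := by
    apply mean_min
    rw [Finset.sum_sub_distrib, Finset.sum_const, Finset.card_univ, Fintype.card_fin,
      hxbar', ← Nat.cast_smul_eq_nsmul ℝ, smul_smul, mul_inv_cancel₀ hn0, one_smul, sub_self]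
  -- step 2: nonexpansive
  have step2 : ∀ i, ‖x' i - xbar‖ ≤ ‖ξ i - ι • d i - xbar‖ := by
    intro i
    rw [hx' i]
    exact proj_nonexp hXconv (hPX _).1 _ (hPX _).2 hxbarX
  -- step 4
  have step4 : ∀ i, ‖ξ i - xbar‖ ≤ ∑ j, W i j * ‖x j - xbar‖ := by
    intro i
    have heq : ξ i - xbar = ∑ j, W i j • (x j - xbar) := by
      rw [hξ i]
      simp only [smul_sub, Finset.sum_sub_distrib, ← Finset.sum_smul, hWrow i, one_smul]
    rw [heq]
    refine (norm_sum_le _ _).trans_eq ?_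
    exact Finset.sum_congr rfl fun j _ => by
      rw [norm_smul, Real.norm_eq_abs, abs_of_nonneg (hWnonneg i j)]
  -- step 3
  have step3 : ∀ i, ‖x' i - xbar‖ ^ 2 ≤
      (∑ j, W i j * ‖x j - xbar‖) ^ 2 + ι ^ 2 * ‖d i‖ ^ 2
        + 2 * ι * (‖d i‖ * ∑ j, W i j * ‖x j - xbar‖) := by
    intro i
    have ht : ‖ξ i - ι • d i - xbar‖ ≤ ‖ξ i - xbar‖ + ι * ‖d i‖ := by
      have : ξ i - ι • d i - xbar = (ξ i - xbar) - ι • d i := by abel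
      rw [this]
      refine (norm_sub_le _ _).trans_eq ?_
      rw [norm_smul, Real.norm_eq_abs, abs_of_pos hι]
    have h2 := (step2 i).trans ht
    have h4 := step4 i
    have hW : (0:ℝ) ≤ ∑ j, W i j * ‖x j - xbar‖ :=
      Finset.sum_nonneg fun j _ => mul_nonneg (hWnonneg i j) (norm_nonneg _)
    nlinarith [norm_nonneg (x' i - xbar), norm_nonneg (ξ i - xbar), norm_nonneg (d i),
      hι.le, sq_nonneg (‖ξ i - xbar‖ - ∑ j, W i j * ‖x j - xbar‖)]
  -- step 5: Jensen / Cauchy-Schwarz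
  have step5 : ∑ i, (∑ j, W i j * ‖x j - xbar‖) ^ 2 ≤ ∑ j, ‖x j - xbar‖ ^ 2 := by
    have h1 : ∀ i, (∑ j, W i j * ‖x j - xbar‖) ^ 2 ≤ ∑ j, W i j * ‖x j - xbar‖ ^ 2 := by
      intro i
      have hcs := Finset.sum_sq_le_sum_mul_sum_of_sq_eq_mul Finset.univ
        (r := fun j => W i j * ‖x j - xbar‖) (f := fun j => W i j)
        (g := fun j => W i j * ‖x j - xbar‖ ^ 2)
        (fun j _ => hWnonneg i j)
        (fun j _ => mul_nonneg (hWnonneg i j) (sq_nonneg _))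
        (fun j _ => by ring)
      rwa [hWrow i, one_mul] at hcs
    calc ∑ i, (∑ j, W i j * ‖x j - xbar‖) ^ 2
        ≤ ∑ i, ∑ j, W i j * ‖x j - xbar‖ ^ 2 := Finset.sum_le_sum fun i _ => h1 i
      _ = ∑ j, ‖x j - xbar‖ ^ 2 := by
          rw [Finset.sum_comm]
          exact Finset.sum_congr rfl fun j _ => by
            rw [← Finset.sum_mul, hWcol j, one_mul]
  calc ∑ i, ‖x' i - xbar'‖ ^ 2 ≤ ∑ i, ‖x' i - xbar‖ ^ 2 := step1
    _ ≤ ∑ i, ((∑ j, W i j * ‖x j - xbar‖) ^ 2 + ι ^ 2 * ‖d i‖ ^ 2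
        + 2 * ι * (‖d i‖ * ∑ j, W i j * ‖x j - xbar‖)) :=
        Finset.sum_le_sum fun i _ => step3 i
    _ ≤ ∑ i, ‖x i - xbar‖ ^ 2 + ι ^ 2 * ∑ i, ‖d i‖ ^ 2 +
        2 * ι * ∑ i, ‖d i‖ * (∑ j, W i j * ‖x j - xbar‖) := by
        rw [Finset.sum_add_distrib, Finset.sum_add_distrib, ← Finset.mul_sum, ← Finset.mul_sum]
        exact add_le_add (add_le_add step5 le_rfl) le_rfl
end

section
/- Mean value theorem for convex functions via subgradients: let f : ℝ^p → ℝ be convex and let x, y ∈ ℝ^p with x ≠ y. Then there exist t ∈ (0,1) and a subgradient g of f at the point u = y + t(x − y) such that f(x) − f(y) = ⟨g, x − y⟩. -/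
open Pointwise

open RealInnerProductSpace

private noncomputable def slopeQ {p : ℕ} (f : EuclideanSpace ℝ (Fin p) → ℝ)
    (u v : EuclideanSpace ℝ (Fin p)) (s : ℝ) : ℝ :=
  (f (u + s • v) - f u) / s

private lemma slopeQ_key {p : ℕ} {f : EuclideanSpace ℝ (Fin p) → ℝ}
    (hconv : ConvexOn ℝ Set.univ f) (u v w : EuclideanSpace ℝ (Fin p))
    {s s' : ℝ} (hs : 0 < s) (hs' : 0 < s') :
    slopeQ f u (v + w) (s * s' / (s + s')) ≤ slopeQ f u v s + slopeQ f u w s' := by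
  have hss' : 0 < s + s' := by linarith
  set r : ℝ := s * s' / (s + s') with hr
  have hr0 : 0 < r := by positivity
  set l : ℝ := s' / (s + s') with hl
  have hl0 : 0 ≤ l := by positivity
  have hl1 : 0 ≤ 1 - l := by
    rw [hl, sub_nonneg, div_le_one hss']; linarith
  have hne : s + s' ≠ 0 := ne_of_gt hss'
  have hpt : l • (u + s • v) + (1 - l) • (u + s' • w) = u + r • (v + w) := by
    rw [hl, hr]; match_scalars <;> field_simp <;> ring
  have hcv := hconv.2 (Set.mem_univ (u + s • v)) (Set.mem_univ (u + s' • w)) hl0 hl1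
    (by ring)
  rw [hpt] at hcv
  simp only [smul_eq_mul] at hcv
  have key : (f (u + r • (v + w)) - f u) / r
      ≤ (f (u + s • v) - f u) / s + (f (u + s' • w) - f u) / s' := by
    rw [div_le_iff₀ hr0]
    have : ((f (u + s • v) - f u) / s + (f (u + s' • w) - f u) / s') * r
        = l * f (u + s • v) + (1 - l) * f (u + s' • w) - f u := by
      rw [hl, hr]; field_simp; ring
    rw [this]; linarith
  simpa [slopeQ] using key

private lemma slopeQ_mono {p : ℕ} {f : EuclideanSpace ℝ (Fin p) → ℝ}
    (hconv : ConvexOn ℝ Set.univ f) (u v : EuclideanSpace ℝ (Fin p))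
    {r s : ℝ} (hr : 0 < r) (hrs : r ≤ s) : slopeQ f u v r ≤ slopeQ f u v s := by
  rcases eq_or_lt_of_le hrs with h | h
  · rw [h]
  have hs : 0 < s := lt_trans hr h
  have hs' : 0 < r * s / (s - r) := by
    apply div_pos (by positivity); linarith
  have := slopeQ_key hconv u v 0 hs hs'
  have h0 : slopeQ f u 0 (r * s / (s - r)) = 0 := by simp [slopeQ]
  have hd : s - r ≠ 0 := by intro h'; rw [sub_eq_zero] at h'; exact absurd h'.symm (ne_of_lt h)
  have harg : s * (r * s / (s - r)) / (s + r * s / (s - r)) = r := by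
    have hB : 0 < s + r * s / (s - r) := by linarith
    rw [div_eq_iff (ne_of_gt hB)]
    field_simp
    ring
  rw [h0, add_zero, add_zero, harg] at this
  exact this

private lemma slopeQ_sum_nonneg {p : ℕ} {f : EuclideanSpace ℝ (Fin p) → ℝ}
    (hconv : ConvexOn ℝ Set.univ f) (u v : EuclideanSpace ℝ (Fin p))
    {s s' : ℝ} (hs : 0 < s) (hs' : 0 < s') :
    0 ≤ slopeQ f u v s + slopeQ f u (-v) s' := by
  have := slopeQ_key hconv u v (-v) hs hs'
  have h0 : slopeQ f u (v + -v) (s * s' / (s + s')) = 0 := by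
    simp [slopeQ]
  rw [h0] at this
  exact this

private noncomputable def subN {p : ℕ} (f : EuclideanSpace ℝ (Fin p) → ℝ)
    (u v : EuclideanSpace ℝ (Fin p)) : ℝ :=
  sInf (slopeQ f u v '' Set.Ioi 0)

private lemma subN_bddBelow {p : ℕ} {f : EuclideanSpace ℝ (Fin p) → ℝ}
    (hconv : ConvexOn ℝ Set.univ f) (u v : EuclideanSpace ℝ (Fin p)) :
    BddBelow (slopeQ f u v '' Set.Ioi 0) := by
  refine ⟨-slopeQ f u (-v) 1, ?_⟩
  rintro q ⟨s, hs, rfl⟩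
  have := slopeQ_sum_nonneg hconv u v hs one_pos
  linarith

private lemma subN_le {p : ℕ} {f : EuclideanSpace ℝ (Fin p) → ℝ}
    (hconv : ConvexOn ℝ Set.univ f) (u v : EuclideanSpace ℝ (Fin p))
    {s : ℝ} (hs : 0 < s) : subN f u v ≤ slopeQ f u v s :=
  csInf_le (subN_bddBelow hconv u v) ⟨s, hs, rfl⟩

private lemma le_subN {p : ℕ} {f : EuclideanSpace ℝ (Fin p) → ℝ}
    (u v : EuclideanSpace ℝ (Fin p)) {b : ℝ}
    (h : ∀ s : ℝ, 0 < s → b ≤ slopeQ f u v s) : b ≤ subN f u v := by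
  refine le_csInf ⟨slopeQ f u v 1, 1, Set.mem_Ioi.2 one_pos, rfl⟩ ?_
  rintro q ⟨s, hs, rfl⟩
  exact h s hs

private lemma subN_add {p : ℕ} {f : EuclideanSpace ℝ (Fin p) → ℝ}
    (hconv : ConvexOn ℝ Set.univ f) (u v w : EuclideanSpace ℝ (Fin p)) :
    subN f u (v + w) ≤ subN f u v + subN f u w := by
  have key : ∀ s : ℝ, 0 < s → ∀ s' : ℝ, 0 < s' →
      subN f u (v + w) ≤ slopeQ f u v s + slopeQ f u w s' := by
    intro s hs s' hs'
    calc subN f u (v + w) ≤ slopeQ f u (v + w) (s * s' / (s + s')) :=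
          subN_le hconv u (v + w) (by positivity)
      _ ≤ slopeQ f u v s + slopeQ f u w s' := slopeQ_key hconv u v w hs hs'
  have h1 : ∀ s : ℝ, 0 < s → subN f u (v + w) - slopeQ f u v s ≤ subN f u w := by
    intro s hs
    refine le_subN u w (fun s' hs' => ?_)
    have := key s hs s' hs'; linarith
  have h2 : subN f u (v + w) - subN f u w ≤ subN f u v := by
    refine le_subN u v (fun s hs => ?_)
    have := h1 s hs; linarith
  linarith

private lemma subN_smul {p : ℕ} {f : EuclideanSpace ℝ (Fin p) → ℝ}
    (hconv : ConvexOn ℝ Set.univ f) (u v : EuclideanSpace ℝ (Fin p))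
    {c : ℝ} (hc : 0 < c) : subN f u (c • v) = c * subN f u v := by
  have hQ : ∀ s : ℝ, 0 < s → slopeQ f u (c • v) s = c * slopeQ f u v (c * s) := by
    intro s hs
    unfold slopeQ
    rw [smul_smul, mul_comm s c]
    field_simp
  have himg : slopeQ f u (c • v) '' Set.Ioi 0 = c • (slopeQ f u v '' Set.Ioi 0) := by
    ext q
    simp only [Set.mem_smul_set, Set.mem_image, Set.mem_Ioi]
    constructor
    · rintro ⟨s, hs, rfl⟩
      exact ⟨slopeQ f u v (c * s), ⟨c * s, mul_pos hc hs, rfl⟩,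
        by rw [smul_eq_mul, ← hQ s hs]⟩
    · rintro ⟨qq, ⟨s, hs, rfl⟩, rfl⟩
      refine ⟨s / c, div_pos hs hc, ?_⟩
      rw [hQ _ (div_pos hs hc), mul_div_cancel₀ _ (ne_of_gt hc), smul_eq_mul]
  rw [subN, himg, Real.sInf_smul_of_nonneg hc.le, smul_eq_mul, subN]

/-- Lemma 1 (convex-function form of Lebourg's mean value theorem): for a convex
`f : ℝ^p → ℝ` and `x ≠ y`, there are `t ∈ (0,1)` and a subgradient `g` of `f` at
`u = y + t(x − y)` with `f(x) − f(y) = ⟨g, x − y⟩`. -/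
theorem convex_mean_value_subgradient
    {p : ℕ} (f : EuclideanSpace ℝ (Fin p) → ℝ)
    (hconv : ConvexOn ℝ Set.univ f)
    (x y : EuclideanSpace ℝ (Fin p)) (hxy : x ≠ y) :
    ∃ t ∈ Set.Ioo (0 : ℝ) 1, ∃ g : EuclideanSpace ℝ (Fin p),
      (∀ z, f (y + t • (x - y)) + ⟪g, z - (y + t • (x - y))⟫ ≤ f z) ∧
      f x - f y = ⟪g, x - y⟫ := by
  have hd0 : x - y ≠ 0 := sub_ne_zero.2 hxy
  have hcont : Continuous f := by
    have := hconv.continuousOn_interior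
    rw [interior_univ] at this
    exact continuousOn_univ.1 this
  set c : ℝ := f x - f y with hc
  set h : ℝ → ℝ := fun s => f (y + s • (x - y)) - c * s with hh
  have hcont_h : Continuous h := by
    apply Continuous.sub
    · exact hcont.comp (continuous_const.add (continuous_id.smul continuous_const))
    · exact continuous_const.mul continuous_id
  obtain ⟨t₀, ht₀mem, ht₀min⟩ := (isCompact_Icc (a := (0:ℝ)) (b := 1)).exists_isMinOn
    ⟨0, by norm_num⟩ hcont_h.continuousOn
  have h0 : h 0 = f y := by simp [hh]
  have h1 : h 1 = f y := by simp [hh, hc]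
  have hmid : h (1/2) ≤ f y := by
    have hcv := hconv.2 (Set.mem_univ x) (Set.mem_univ y)
      (by norm_num : (0:ℝ) ≤ 1/2) (by norm_num : (0:ℝ) ≤ 1/2) (by norm_num)
    have hpt : ((1:ℝ)/2) • x + ((1:ℝ)/2) • y = y + ((1:ℝ)/2) • (x - y) := by
      match_scalars <;> ring
    rw [hpt] at hcv
    simp only [smul_eq_mul] at hcv
    simp only [hh, hc]
    linarith
  obtain ⟨t, htI, htmin⟩ : ∃ t ∈ Set.Ioo (0:ℝ) 1, ∀ s ∈ Set.Icc (0:ℝ) 1, h t ≤ h s := by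
    by_cases hI : t₀ ∈ Set.Ioo (0:ℝ) 1
    · exact ⟨t₀, hI, fun s hs => ht₀min hs⟩
    · refine ⟨1/2, by norm_num, fun s hs => ?_⟩
      have ht₀val : h t₀ = f y := by
        rcases ht₀mem with ⟨hl, hr⟩
        rcases eq_or_lt_of_le hl with h' | h'
        · rw [← h', h0]
        rcases eq_or_lt_of_le hr with h' | h''
        · rw [h', h1]
        · exact absurd ⟨h', h''⟩ hI
      calc h (1/2) ≤ f y := hmid
        _ = h t₀ := ht₀val.symm
        _ ≤ h s := ht₀min hs
  obtain ⟨ht0, ht1⟩ := htI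
  refine ⟨t, ⟨ht0, ht1⟩, ?_⟩
  set u : EuclideanSpace ℝ (Fin p) := y + t • (x - y) with hu
  -- N d ≥ c
  have hNd : c ≤ subN f u (x - y) := by
    refine le_subN u _ (fun s hs => ?_)
    set s0 : ℝ := min s (1 - t) with hs0
    have hs00 : 0 < s0 := lt_min hs (by linarith)
    have hs0le : s0 ≤ 1 - t := min_le_right _ _
    have hstep : c ≤ slopeQ f u (x - y) s0 := by
      have hmem : t + s0 ∈ Set.Icc (0:ℝ) 1 := ⟨by linarith, by linarith⟩
      have := htmin (t + s0) hmem
      have hvec : u + s0 • (x - y) = y + (t + s0) • (x - y) := by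
        rw [hu, add_smul]; abel
      simp only [hh] at this
      rw [slopeQ, hvec, le_div_iff₀ hs00]
      linarith
    exact hstep.trans (slopeQ_mono hconv u _ hs00 (min_le_left _ _))
  -- N (-d) ≥ -c
  have hNd' : -c ≤ subN f u (-(x - y)) := by
    refine le_subN u _ (fun s hs => ?_)
    set s0 : ℝ := min s t with hs0
    have hs00 : 0 < s0 := lt_min hs ht0
    have hs0le : s0 ≤ t := min_le_right _ _
    have hstep : -c ≤ slopeQ f u (-(x - y)) s0 := by
      have hmem : t - s0 ∈ Set.Icc (0:ℝ) 1 := ⟨by linarith, by linarith⟩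
      have := htmin (t - s0) hmem
      have hvec : u + s0 • (-(x - y)) = y + (t - s0) • (x - y) := by
        rw [hu, sub_smul, smul_neg]; abel
      simp only [hh] at this
      rw [slopeQ, hvec, le_div_iff₀ hs00]
      linarith
    exact hstep.trans (slopeQ_mono hconv u _ hs00 (min_le_left _ _))
  -- Hahn-Banach extension
  have hdom : ∀ z : (LinearPMap.mkSpanSingleton (K := ℝ) (σ := RingHom.id ℝ) (x - y) c hd0).domain,
      (LinearPMap.mkSpanSingleton (K := ℝ) (σ := RingHom.id ℝ) (x - y) c hd0) z ≤ subN f u z := by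
    rintro ⟨z, hz⟩
    obtain ⟨a, ha⟩ := Submodule.mem_span_singleton.1 hz
    have hval : (LinearPMap.mkSpanSingleton (K := ℝ) (σ := RingHom.id ℝ) (x - y) c hd0) ⟨z, hz⟩ = a * c := by
      have : (⟨z, hz⟩ : (LinearPMap.mkSpanSingleton (K := ℝ) (σ := RingHom.id ℝ) (x - y) c hd0).domain)
          = ⟨a • (x - y), ha ▸ hz⟩ := Subtype.ext ha.symm
      rw [this, LinearPMap.mkSpanSingleton'_apply, RingHom.id_apply, smul_eq_mul]
    rw [hval]
    simp only
    rw [show z = a • (x - y) from ha.symm]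
    rcases lt_trichotomy a 0 with hA | hA | hA
    · have : a • (x - y) = (-a) • (-(x - y)) := by rw [smul_neg, neg_smul, neg_neg]
      rw [this, subN_smul hconv u _ (by linarith : (0:ℝ) < -a)]
      nlinarith [hNd']
    · have hz0 : subN f u ((0:ℝ) • (x - y)) = 0 := by
        rw [zero_smul]
        have hle : subN f u 0 ≤ 0 := by
          have := subN_le hconv u 0 one_pos
          simpa [slopeQ] using this
        have hge : (0:ℝ) ≤ subN f u 0 := le_subN u 0 (fun s hs => by simp [slopeQ])
        linarith
      rw [hA, hz0, zero_mul]
    · rw [subN_smul hconv u _ hA]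
      nlinarith [hNd]
  obtain ⟨G, hGeq, hGle⟩ := exists_extension_of_le_sublinear
    (LinearPMap.mkSpanSingleton (K := ℝ) (σ := RingHom.id ℝ) (x - y) c hd0) (subN f u)
    (fun a ha v => subN_smul hconv u v ha) (subN_add hconv u) hdom
  -- build g from G
  have : FiniteDimensional ℝ (EuclideanSpace ℝ (Fin p)) := by infer_instance
  set G' : EuclideanSpace ℝ (Fin p) →L[ℝ] ℝ := LinearMap.toContinuousLinearMap G with hG'
  set g : EuclideanSpace ℝ (Fin p) := (InnerProductSpace.toDual ℝ _).symm G' with hg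
  have hginner : ∀ v, ⟪g, v⟫ = G v := fun v => InnerProductSpace.toDual_symm_apply
  have hGsub : ∀ v, G v ≤ f (u + v) - f u := by
    intro v
    refine (hGle v).trans ((subN_le hconv u v one_pos).trans ?_)
    rw [slopeQ]; simp
  refine ⟨g, fun z => ?_, ?_⟩
  · have := hGsub (z - u)
    rw [hginner]
    have : u + (z - u) = z := by abel
    have h2 := hGsub (z - u)
    rw [this] at h2
    linarith
  · have hmem : x - y ∈ Submodule.span ℝ {x - y} := Submodule.mem_span_singleton_self _
    have := hGeq ⟨x - y, hmem⟩
    rw [LinearPMap.mkSpanSingleton_apply ℝ ℝ hd0 c] at this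
    rw [hginner, this, hc]
end
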